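/- arXiv:1501.05930 — 3 statements merged into one kernel-verified Lean document; each statement's English description precedes it below -/
import Mathlib

section
/- Fix α > 0 and a sequence of sampling rates ρ_n with n·ρ_n → 0 (i.e., ρ_n = o(1/n)). Let {(𝒮_n, τ_n)} be detectors operating at uncertainty level A_n = ⌈2^{αn}⌉ for which there exists ε_n → 0 with ℙ(|𝒮^{≤τ_n}|/τ_n ≤ ρ_n) ≥ 1 − ε_n for all large n, and whose false-alarm probability vanishes: ℙ(τ_n < ν_n) → 0. Then the delay is exponential in n: there exist constants δ > 0 and c > 0 such that for all sufficiently large n, ℙ(τ_n − ν_n ≥ c·2^{αn}) ≥ δ; consequently, for every ε ∈ (0, δ) and all sufficiently large n, the delay satisfies d((𝒮_n, τ_n), ε) ≥ c·2^{αn}. -/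
open Filter Finset

noncomputable section

namespace ChangeDetect

variable {𝒴 : Type} [Fintype 𝒴]

/-- `P` is a probability mass function on the finite alphabet `𝒴`. -/
def IsProb (P : 𝒴 → ℝ) : Prop := (∀ y, 0 ≤ P y) ∧ ∑ y, P y = 1

/-- Relative entropy (base 2): `D(P₁‖P₀) = Σ_y P₁(y) log₂ (P₁(y)/P₀(y))`. -/
def KL (P₁ P₀ : 𝒴 → ℝ) : ℝ := ∑ y, P₁ y * Real.logb 2 (P₁ y / P₀ y)

/-- Uncertainty level `A_n = ⌈2^(αn)⌉`. -/
def Alevel (α : ℝ) (n : ℕ) : ℕ := ⌈(2 : ℝ) ^ (α * n)⌉₊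

/-- `n*(α) = n α / D(P₁‖P₀)`. -/
def nstar (P₀ P₁ : 𝒴 → ℝ) (α : ℝ) (n : ℕ) : ℝ := n * α / KL P₁ P₀

/-- Likelihood of the observation sequence `y` (time `t ∈ {1,…,A+n-1}` is index `t-1`)
when the change starts at time `ν.1 + 1`: coordinates with index in `[ν.1, ν.1+n)`
are distributed according to `P₁`, all others according to `P₀`, independently. -/
def lik (P₀ P₁ : 𝒴 → ℝ) (n : ℕ) {A : ℕ} (ν : Fin A) (y : Fin (A + n - 1) → 𝒴) : ℝ :=
  ∏ i : Fin (A + n - 1), if ν.1 ≤ i.1 ∧ i.1 < ν.1 + n then P₁ (y i) else P₀ (y i)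

open Classical in
/-- Joint probability of an event `E` depending on the (uniform) change point `ν` and the
observations `y`. -/
def jointProb (P₀ P₁ : 𝒴 → ℝ) (n A : ℕ)
    (E : Fin A → (Fin (A + n - 1) → 𝒴) → Prop) : ℝ :=
  (A : ℝ)⁻¹ * ∑ ν : Fin A, ∑ y : Fin (A + n - 1) → 𝒴, if E ν y then lik P₀ P₁ n ν y else 0

open Classical in
/-- Probability of an event under an i.i.d.-`P₀` observation sequence of length `T`. -/
def nullProb (P₀ : 𝒴 → ℝ) (T : ℕ) (E : (Fin T → 𝒴) → Prop) : ℝ :=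
  ∑ y : Fin T → 𝒴, if E y then ∏ i, P₀ (y i) else 0

/-- Expectation under an i.i.d.-`P₀` observation sequence of length `T`. -/
def nullExp (P₀ : 𝒴 → ℝ) (T : ℕ) (f : (Fin T → 𝒴) → ℝ) : ℝ :=
  ∑ y : Fin T → 𝒴, f y * ∏ i, P₀ (y i)

/-- A full-sampling detector: a stopping time `tau` (valued in `{1,…,A+n-1}`, time `t`
corresponding to index `t-1`) with respect to the natural filtration of the observations. -/
structure FullDetector (𝒴 : Type) [Fintype 𝒴] (A n : ℕ) where
  tau : (Fin (A + n - 1) → 𝒴) → ℕ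
  tau_pos : ∀ y, 1 ≤ tau y
  tau_le : ∀ y, tau y ≤ A + n - 1
  stopping : ∀ y y', (∀ i : Fin (A + n - 1), i.1 + 1 ≤ tau y → y i = y' i) → tau y' = tau y

/-- False-alarm probability `ℙ(τ < ν)` of a full-sampling detector. -/
def ffalseAlarm (P₀ P₁ : 𝒴 → ℝ) {A n : ℕ} (D : FullDetector 𝒴 A n) : ℝ :=
  jointProb P₀ P₁ n A fun ν y => D.tau y < ν.1 + 1

/-- Delay `d(τ, ε)`: the least `l ≥ 0` such that `ℙ(τ - ν ≤ l - 1) ≥ 1 - ε`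
(the event `τ - ν ≤ l - 1` being `τ < ν + l`). -/
def fdelay (P₀ P₁ : 𝒴 → ℝ) {A n : ℕ} (D : FullDetector 𝒴 A n) (ε : ℝ) : ℕ :=
  sInf {l : ℕ | 1 - ε ≤ jointProb P₀ P₁ n A fun ν y => D.tau y < ν.1 + 1 + l}

/-- A detector `(𝒮, τ)` with (possibly randomized, adaptive) sampling strategy `samp`
(a set of sampling times in `{1,…,A+n-1}`) and stopping rule `tau`.  `R` is the
randomization seed space, with distribution `μR`.  The field `causal` expresses that the
sampling times are chosen sequentially and adaptively (each new sampling time depending only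
on previously observed samples) and that `tau` is a stopping time relative to the sampled
process: the samples taken up to any time `t`, as well as the decision to stop by time `t`,
are determined by the values observed at the sampled times up to `t`.  The last sample is
taken at time `tau`. -/
structure Detector (𝒴 : Type) [Fintype 𝒴] (A n : ℕ) where
  R : Type
  [fintypeR : Fintype R]
  μR : R → ℝ
  μR_nonneg : ∀ r, 0 ≤ μR r
  μR_sum : ∑ r, μR r = 1
  samp : R → (Fin (A + n - 1) → 𝒴) → Finset ℕ
  tau : R → (Fin (A + n - 1) → 𝒴) → ℕ
  tau_pos : ∀ r y, 1 ≤ tau r y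
  tau_le : ∀ r y, tau r y ≤ A + n - 1
  samp_subset : ∀ r y, samp r y ⊆ Finset.Icc 1 (A + n - 1)
  tau_mem : ∀ r y, tau r y ∈ samp r y
  samp_le_tau : ∀ r y, ∀ t ∈ samp r y, t ≤ tau r y
  causal : ∀ r y y' (t : ℕ),
    (∀ i : Fin (A + n - 1), i.1 + 1 ∈ samp r y → i.1 + 1 ≤ t → y i = y' i) →
    (samp r y').filter (· ≤ t) = (samp r y).filter (· ≤ t) ∧
    (tau r y ≤ t → tau r y' = tau r y) ∧ (tau r y' ≤ t → tau r y' = tau r y)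

attribute [instance] Detector.fintypeR

/-- `𝒮^{≤t}`: the samples taken up to time `t`. -/
def sampUpTo {A n : ℕ} (D : Detector 𝒴 A n) (r : D.R) (y : Fin (A + n - 1) → 𝒴)
    (t : ℕ) : Finset ℕ :=
  (D.samp r y).filter (· ≤ t)

/-- Probability, under the joint law (random seed, uniform change point, observations),
of an event `E`. -/
def dprob (P₀ P₁ : 𝒴 → ℝ) {A n : ℕ} (D : Detector 𝒴 A n)
    (E : D.R → Fin A → (Fin (A + n - 1) → 𝒴) → Prop) : ℝ :=
  ∑ r, D.μR r * jointProb P₀ P₁ n A (E r)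

/-- Probability of an event when the detector is run on an i.i.d.-`P₀` sequence (`ℙ₀`). -/
def dnullProb (P₀ : 𝒴 → ℝ) {A n : ℕ} (D : Detector 𝒴 A n)
    (E : D.R → (Fin (A + n - 1) → 𝒴) → Prop) : ℝ :=
  ∑ r, D.μR r * nullProb P₀ (A + n - 1) (E r)

/-- Expectation when the detector is run on an i.i.d.-`P₀` sequence (`𝔼₀`). -/
def dnullExp (P₀ : 𝒴 → ℝ) {A n : ℕ} (D : Detector 𝒴 A n)
    (f : D.R → (Fin (A + n - 1) → 𝒴) → ℝ) : ℝ :=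
  ∑ r, D.μR r * nullExp P₀ (A + n - 1) (f r)

open Classical in
/-- Conditional probability of an event given `ν = v` (the change starts at time `v.1+1`). -/
def dcondProb (P₀ P₁ : 𝒴 → ℝ) {A n : ℕ} (D : Detector 𝒴 A n) (v : Fin A)
    (E : D.R → (Fin (A + n - 1) → 𝒴) → Prop) : ℝ :=
  ∑ r, D.μR r * ∑ y : Fin (A + n - 1) → 𝒴, if E r y then lik P₀ P₁ n v y else 0

/-- False-alarm probability `ℙ(τ < ν)`. -/
def dfalseAlarm (P₀ P₁ : 𝒴 → ℝ) {A n : ℕ} (D : Detector 𝒴 A n) : ℝ :=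
  dprob P₀ P₁ D fun r ν y => D.tau r y < ν.1 + 1

/-- Delay `d((𝒮,τ), ε)`: the least `l ≥ 0` such that `ℙ(τ - ν ≤ l - 1) ≥ 1 - ε`. -/
def ddelay (P₀ P₁ : 𝒴 → ℝ) {A n : ℕ} (D : Detector 𝒴 A n) (ε : ℝ) : ℕ :=
  sInf {l : ℕ | 1 - ε ≤ dprob P₀ P₁ D fun r ν y => D.tau r y < ν.1 + 1 + l}

/-- Sampling rate `ρ((𝒮,τ), ε)`: the least `x ≥ 0` with `ℙ(|𝒮^{≤τ}|/τ ≤ x) ≥ 1 - ε`. -/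
def dsampRate (P₀ P₁ : 𝒴 → ℝ) {A n : ℕ} (D : Detector 𝒴 A n) (ε : ℝ) : ℝ :=
  sInf {x : ℝ | 0 ≤ x ∧ 1 - ε ≤ dprob P₀ P₁ D fun r ν y =>
    ((sampUpTo D r y (D.tau r y)).card : ℝ) / (D.tau r y : ℝ) ≤ x}


/-! ### Auxiliary machinery for the proof of Statement 5 -/

section Aux

open Classical in
lemma sum_prod_apply' {T : ℕ} (f : Fin T → 𝒴 → ℝ) :
    ∑ y : Fin T → 𝒴, ∏ i, f i (y i) = ∏ i, ∑ c, f i c := by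
  rw [Finset.prod_univ_sum, Fintype.piFinset_univ]

lemma sum_update_invariant {T : ℕ} [Nonempty 𝒴] (j : Fin T)
    (F : (Fin T → 𝒴) → ℝ) (hF : ∀ y c, F (Function.update y j c) = F y)
    (p q : 𝒴 → ℝ) (hpq : ∑ c, p c = ∑ c, q c) :
    ∑ y, F y * p (y j) = ∑ y, F y * q (y j) := by
  classical
  have key : ∀ r : 𝒴 → ℝ, ∑ y : Fin T → 𝒴, F y * r (y j)
      = (∑ c, r c) * ∑ z : ({ i : Fin T // i ≠ j } → 𝒴),
          F ((Equiv.piSplitAt j (fun _ => 𝒴)).symm (Classical.arbitrary 𝒴, z)) := by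
    intro r
    rw [← Equiv.sum_comp (Equiv.piSplitAt j (fun _ => 𝒴)).symm (fun y => F y * r (y j))]
    rw [Fintype.sum_prod_type]
    have hval : ∀ (c : 𝒴) (z : { i : Fin T // i ≠ j } → 𝒴),
        (Equiv.piSplitAt j (fun _ => 𝒴)).symm (c, z)
          = Function.update ((Equiv.piSplitAt j (fun _ => 𝒴)).symm (Classical.arbitrary 𝒴, z)) j c := by
      intro c z
      funext i
      by_cases h : i = j
      · subst h; simp [Equiv.piSplitAt_symm_apply, Function.update_self]
      · simp [Equiv.piSplitAt_symm_apply, h, Function.update_of_ne h]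
    have key2 : ∀ (c : 𝒴) (z : { i : Fin T // i ≠ j } → 𝒴),
        F ((Equiv.piSplitAt j (fun _ => 𝒴)).symm (c, z)) * r (((Equiv.piSplitAt j (fun _ => 𝒴)).symm (c, z)) j)
        = F ((Equiv.piSplitAt j (fun _ => 𝒴)).symm (Classical.arbitrary 𝒴, z)) * r c := by
      intro c z
      rw [hval c z, hF]
      simp [Equiv.piSplitAt_symm_apply]
    rw [Finset.sum_congr rfl (fun c _ => Finset.sum_congr rfl (fun z _ => key2 c z))]
    rw [Finset.sum_comm]
    rw [Finset.mul_sum]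
    congr 1; funext z
    rw [← Finset.mul_sum, mul_comm]
  rw [key p, key q, hpq]

lemma nonempty_of_isProb {P : 𝒴 → ℝ} (h : IsProb P) : Nonempty 𝒴 := by
  rcases isEmpty_or_nonempty 𝒴 with he | hn
  · exfalso; have := h.2; rw [Finset.univ_eq_empty, Finset.sum_empty] at this; norm_num at this
  · exact hn

open Classical in
lemma transfer_sum {T : ℕ} (P₀ P₁ : 𝒴 → ℝ) (h₀ : IsProb P₀) (h₁ : IsProb P₁)
    (W : Finset (Fin T)) (E : (Fin T → 𝒴) → Prop)
    (hE : ∀ y y', (∀ i, i ∉ W → y i = y' i) → E y → E y') :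
    ∑ y, (if E y then ∏ i, (if i ∈ W then P₁ (y i) else P₀ (y i)) else 0)
    = ∑ y, (if E y then ∏ i, P₀ (y i) else 0) := by
  classical
  have hne : Nonempty 𝒴 := nonempty_of_isProb h₀
  have hEup : ∀ (y : Fin T → 𝒴) (a : Fin T), a ∈ W → ∀ c, E (Function.update y a c) ↔ E y := by
    intro y a ha c
    constructor
    · intro h
      have := hE (Function.update y a c) (Function.update (Function.update y a c) a (y a))
        (fun i hi => by
          rcases eq_or_ne i a with rfl | hia
          · exact absurd ha hi
          · simp [Function.update_of_ne hia]) h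
      rwa [Function.update_idem, Function.update_eq_self] at this
    · intro h
      exact hE y (Function.update y a c)
        (fun i hi => by
          have hia : i ≠ a := fun h' => hi (h' ▸ ha)
          simp [Function.update_of_ne hia]) h
  suffices H : ∀ S : Finset (Fin T), S ⊆ W →
      ∑ y, (if E y then ∏ i, (if i ∈ S then P₁ (y i) else P₀ (y i)) else 0)
      = ∑ y, (if E y then ∏ i, P₀ (y i) else 0) by
    simpa using H W (le_refl W)
  intro S
  induction S using Finset.induction_on with
  | empty => intro _; simp
  | @insert a S ha ih =>
    intro hsub
    have haW : a ∈ W := hsub (Finset.mem_insert_self a S)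
    have hSW : S ⊆ W := fun i hi => hsub (Finset.mem_insert_of_mem hi)
    rw [← ih hSW]
    set F : (Fin T → 𝒴) → ℝ := fun y =>
      (if E y then 1 else 0) * ∏ i ∈ Finset.univ.erase a, (if i ∈ S then P₁ (y i) else P₀ (y i)) with hFdef
    have hsplit : ∀ (p : 𝒴 → ℝ) (Q : Finset (Fin T)), (a ∈ Q → p = P₁) → (a ∉ Q → p = P₀) →
        (∀ i ∈ Finset.univ.erase a, (i ∈ Q) = (i ∈ S)) →
        ∀ y, (if E y then ∏ i, (if i ∈ Q then P₁ (y i) else P₀ (y i)) else 0) = F y * p (y a) := by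
      intro p Q hp1 hp0 hQS y
      rw [hFdef]
      have hprod : ∏ i, (if i ∈ Q then P₁ (y i) else P₀ (y i))
          = (if a ∈ Q then P₁ (y a) else P₀ (y a)) * ∏ i ∈ Finset.univ.erase a, (if i ∈ Q then P₁ (y i) else P₀ (y i)) := by
        exact (Finset.mul_prod_erase Finset.univ _ (Finset.mem_univ a)).symm
      have hpa : (if a ∈ Q then P₁ (y a) else P₀ (y a)) = p (y a) := by
        by_cases h : a ∈ Q
        · simp [h, hp1 h]
        · simp [h, hp0 h]
      have hrest : ∏ i ∈ Finset.univ.erase a, (if i ∈ Q then P₁ (y i) else P₀ (y i))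
          = ∏ i ∈ Finset.univ.erase a, (if i ∈ S then P₁ (y i) else P₀ (y i)) := by
        apply Finset.prod_congr rfl
        intro i hi; simp only [hQS i hi]
      by_cases hEy : E y <;> simp [hEy, hprod, hpa, hrest] <;> ring
    have h1 : ∀ y, (if E y then ∏ i, (if i ∈ insert a S then P₁ (y i) else P₀ (y i)) else 0) = F y * P₁ (y a) := by
      apply hsplit
      · intro _; rfl
      · intro h; exact absurd (Finset.mem_insert_self a S) h
      · intro i hi
        have : i ≠ a := (Finset.mem_erase.mp hi).1
        simp [Finset.mem_insert, this]
    have h2 : ∀ y, (if E y then ∏ i, (if i ∈ S then P₁ (y i) else P₀ (y i)) else 0) = F y * P₀ (y a) := by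
      apply hsplit
      · intro h; exact absurd h ha
      · intro _; rfl
      · intro i _; rfl
    rw [Finset.sum_congr rfl (fun y _ => h1 y), Finset.sum_congr rfl (fun y _ => h2 y)]
    apply sum_update_invariant a F _ P₁ P₀ (by rw [h₁.2, h₀.2])
    intro y c
    rw [hFdef]
    simp only []
    have hE' : (if E (Function.update y a c) then (1:ℝ) else 0) = (if E y then 1 else 0) := by
      by_cases h : E y
      · simp [h, (hEup y a haW c).mpr h]
      · have hne' : ¬ E (Function.update y a c) := fun h' => h ((hEup y a haW c).mp h')
        simp [h, hne']
    rw [hE']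
    congr 1
    apply Finset.prod_congr rfl
    intro i hi
    have : i ≠ a := (Finset.mem_erase.mp hi).1
    rw [Function.update_of_ne this]

end Aux
section ProbBasics

variable {P₀ P₁ : 𝒴 → ℝ}

lemma lik_nonneg (h₀ : IsProb P₀) (h₁ : IsProb P₁) {n A : ℕ} (v : Fin A)
    (y : Fin (A + n - 1) → 𝒴) : 0 ≤ lik P₀ P₁ n v y := by
  apply Finset.prod_nonneg
  intro i _
  by_cases h : v.1 ≤ i.1 ∧ i.1 < v.1 + n
  · simp [h, h₁.1 (y i)]
  · simp [h, h₀.1 (y i)]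

lemma lik_sum_one (h₀ : IsProb P₀) (h₁ : IsProb P₁) {n A : ℕ} (v : Fin A) :
    ∑ y : Fin (A + n - 1) → 𝒴, lik P₀ P₁ n v y = 1 := by
  classical
  unfold lik
  rw [sum_prod_apply' (fun i c => if v.1 ≤ i.1 ∧ i.1 < v.1 + n then P₁ c else P₀ c)]
  rw [Finset.prod_eq_one]
  intro i _
  by_cases h : v.1 ≤ i.1 ∧ i.1 < v.1 + n <;> simp [h, h₀.2, h₁.2]

lemma prodP_nonneg (h₀ : IsProb P₀) {T : ℕ} (y : Fin T → 𝒴) : 0 ≤ ∏ i, P₀ (y i) :=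
  Finset.prod_nonneg fun i _ => h₀.1 (y i)

lemma prodP_sum_one (h₀ : IsProb P₀) (T : ℕ) :
    ∑ y : Fin T → 𝒴, ∏ i, P₀ (y i) = 1 := by
  rw [sum_prod_apply' (fun _ c => P₀ c), Finset.prod_eq_one]
  intro i _; exact h₀.2

end ProbBasics

section DetectorProb

variable {P₀ P₁ : 𝒴 → ℝ} {A n : ℕ} {D : Detector 𝒴 A n}

omit [Fintype 𝒴] in
open Classical in
lemma ite_le_ite {E F : Prop} {p : ℝ} (hp : 0 ≤ p) (h : E → F) :
    (if E then p else 0) ≤ (if F then p else 0) := by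
  classical
  by_cases hE : E
  · simp [hE, h hE]
  · simp [hE]; by_cases hF : F <;> simp [hF, hp]

lemma dnullProb_nonneg (h₀ : IsProb P₀) (E : D.R → (Fin (A + n - 1) → 𝒴) → Prop) :
    0 ≤ dnullProb P₀ D E := by
  classical
  apply Finset.sum_nonneg
  intro r _
  apply mul_nonneg (D.μR_nonneg r)
  apply Finset.sum_nonneg
  intro y _
  by_cases h : E r y <;> simp [nullProb, h, prodP_nonneg h₀]

lemma dnullProb_mono (h₀ : IsProb P₀) {E F : D.R → (Fin (A + n - 1) → 𝒴) → Prop}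
    (h : ∀ r y, E r y → F r y) : dnullProb P₀ D E ≤ dnullProb P₀ D F := by
  classical
  apply Finset.sum_le_sum
  intro r _
  apply mul_le_mul_of_nonneg_left _ (D.μR_nonneg r)
  apply Finset.sum_le_sum
  intro y _
  exact ite_le_ite (prodP_nonneg h₀ y) (h r y)

lemma dnullProb_true (h₀ : IsProb P₀) (E : D.R → (Fin (A + n - 1) → 𝒴) → Prop)
    (hE : ∀ r y, E r y) : dnullProb P₀ D E = 1 := by
  classical
  have : ∀ r : D.R, nullProb P₀ (A + n - 1) (E r) = 1 := by
    intro r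
    unfold nullProb
    rw [Finset.sum_congr rfl (fun y _ => if_pos (hE r y))]
    exact prodP_sum_one h₀ _
  unfold dnullProb
  rw [Finset.sum_congr rfl (fun r _ => by rw [this r, mul_one])]
  exact D.μR_sum

lemma dnullProb_compl (h₀ : IsProb P₀) (E : D.R → (Fin (A + n - 1) → 𝒴) → Prop) :
    dnullProb P₀ D E + dnullProb P₀ D (fun r y => ¬ E r y) = 1 := by
  classical
  unfold dnullProb
  rw [← Finset.sum_add_distrib]
  have : ∀ r : D.R, D.μR r * nullProb P₀ (A+n-1) (E r) + D.μR r * nullProb P₀ (A+n-1) (fun y => ¬ E r y)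
      = D.μR r := by
    intro r
    rw [← mul_add]
    have h3 : nullProb P₀ (A+n-1) (E r) + nullProb P₀ (A+n-1) (fun y => ¬ E r y) = 1 := by
      unfold nullProb
      rw [← Finset.sum_add_distrib, ← prodP_sum_one h₀ (A+n-1)]
      apply Finset.sum_congr rfl
      intro y _
      by_cases h : E r y <;> simp [h]
    rw [h3, mul_one]
  rw [Finset.sum_congr rfl (fun r _ => this r)]
  exact D.μR_sum

lemma dnullProb_le_add (h₀ : IsProb P₀) {E F G : D.R → (Fin (A + n - 1) → 𝒴) → Prop}
    (h : ∀ r y, E r y → F r y ∨ G r y) :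
    dnullProb P₀ D E ≤ dnullProb P₀ D F + dnullProb P₀ D G := by
  classical
  unfold dnullProb
  rw [← Finset.sum_add_distrib]
  apply Finset.sum_le_sum
  intro r _
  rw [← mul_add]
  apply mul_le_mul_of_nonneg_left _ (D.μR_nonneg r)
  unfold nullProb
  rw [← Finset.sum_add_distrib]
  apply Finset.sum_le_sum
  intro y _
  by_cases hE : E r y
  · rcases h r y hE with hF | hG
    · have h1 : (0:ℝ) ≤ (if G r y then ∏ i, P₀ (y i) else 0) := by
        by_cases hG' : G r y <;> simp [hG', prodP_nonneg h₀]
      simp only [if_pos hE, if_pos hF]; linarith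
    · have h1 : (0:ℝ) ≤ (if F r y then ∏ i, P₀ (y i) else 0) := by
        by_cases hF' : F r y <;> simp [hF', prodP_nonneg h₀]
      simp only [if_pos hE, if_pos hG]; linarith
  · have h1 : (0:ℝ) ≤ (if F r y then ∏ i, P₀ (y i) else 0) := by
      by_cases hF' : F r y <;> simp [hF', prodP_nonneg h₀]
    have h2 : (0:ℝ) ≤ (if G r y then ∏ i, P₀ (y i) else 0) := by
      by_cases hG' : G r y <;> simp [hG', prodP_nonneg h₀]
    simp only [if_neg hE]; linarith

lemma dcondProb_nonneg (h₀ : IsProb P₀) (h₁ : IsProb P₁) (v : Fin A)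
    (E : D.R → (Fin (A + n - 1) → 𝒴) → Prop) : 0 ≤ dcondProb P₀ P₁ D v E := by
  classical
  apply Finset.sum_nonneg
  intro r _
  apply mul_nonneg (D.μR_nonneg r)
  apply Finset.sum_nonneg
  intro y _
  by_cases h : E r y <;> simp [h, lik_nonneg h₀ h₁]

lemma dcondProb_mono (h₀ : IsProb P₀) (h₁ : IsProb P₁) (v : Fin A)
    {E F : D.R → (Fin (A + n - 1) → 𝒴) → Prop}
    (h : ∀ r y, E r y → F r y) : dcondProb P₀ P₁ D v E ≤ dcondProb P₀ P₁ D v F := by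
  classical
  apply Finset.sum_le_sum
  intro r _
  apply mul_le_mul_of_nonneg_left _ (D.μR_nonneg r)
  apply Finset.sum_le_sum
  intro y _
  exact ite_le_ite (lik_nonneg h₀ h₁ v y) (h r y)

lemma dcondProb_one (h₀ : IsProb P₀) (h₁ : IsProb P₁) (v : Fin A)
    (E : D.R → (Fin (A + n - 1) → 𝒴) → Prop) (hE : ∀ r y, E r y) :
    dcondProb P₀ P₁ D v E = 1 := by
  classical
  unfold dcondProb
  rw [Finset.sum_congr rfl (fun r _ => by
    rw [Finset.sum_congr rfl (fun y _ => if_pos (hE r y)), lik_sum_one h₀ h₁ v, mul_one])]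
  exact D.μR_sum

lemma dprob_eq_avg (E : D.R → Fin A → (Fin (A + n - 1) → 𝒴) → Prop) :
    dprob P₀ P₁ D E = (A : ℝ)⁻¹ * ∑ v : Fin A, dcondProb P₀ P₁ D v (fun r y => E r v y) := by
  classical
  unfold dprob jointProb dcondProb
  simp only [Finset.mul_sum]
  rw [Finset.sum_comm]
  apply Finset.sum_congr rfl; intro v _
  apply Finset.sum_congr rfl; intro r _
  apply Finset.sum_congr rfl; intro y _
  ring

end DetectorProb
section DetectorProb2

variable {P₀ P₁ : 𝒴 → ℝ} {A n : ℕ} {D : Detector 𝒴 A n}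

lemma dprob_nonneg (h₀ : IsProb P₀) (h₁ : IsProb P₁)
    (E : D.R → Fin A → (Fin (A + n - 1) → 𝒴) → Prop) : 0 ≤ dprob P₀ P₁ D E := by
  rw [dprob_eq_avg]
  apply mul_nonneg (by positivity)
  exact Finset.sum_nonneg fun v _ => dcondProb_nonneg h₀ h₁ v _

lemma dprob_mono (h₀ : IsProb P₀) (h₁ : IsProb P₁)
    {E F : D.R → Fin A → (Fin (A + n - 1) → 𝒴) → Prop}
    (h : ∀ r v y, E r v y → F r v y) : dprob P₀ P₁ D E ≤ dprob P₀ P₁ D F := by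
  rw [dprob_eq_avg, dprob_eq_avg]
  apply mul_le_mul_of_nonneg_left _ (by positivity)
  exact Finset.sum_le_sum fun v _ => dcondProb_mono h₀ h₁ v (fun r y => h r v y)

lemma dprob_one (h₀ : IsProb P₀) (h₁ : IsProb P₁) (hA : 0 < A)
    (E : D.R → Fin A → (Fin (A + n - 1) → 𝒴) → Prop) (hE : ∀ r v y, E r v y) :
    dprob P₀ P₁ D E = 1 := by
  rw [dprob_eq_avg]
  rw [Finset.sum_congr rfl (fun v _ => dcondProb_one h₀ h₁ v _ (fun r y => hE r v y))]
  rw [Finset.sum_const, Finset.card_univ, Fintype.card_fin, nsmul_eq_mul, mul_one]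
  rw [inv_mul_cancel₀]
  exact Nat.cast_ne_zero.mpr hA.ne'

lemma dcondProb_compl (h₀ : IsProb P₀) (h₁ : IsProb P₁) (v : Fin A)
    (E : D.R → (Fin (A + n - 1) → 𝒴) → Prop) :
    dcondProb P₀ P₁ D v E + dcondProb P₀ P₁ D v (fun r y => ¬ E r y) = 1 := by
  classical
  unfold dcondProb
  rw [← Finset.sum_add_distrib, ← D.μR_sum]
  apply Finset.sum_congr rfl
  intro r _
  rw [← mul_add]
  conv_rhs => rw [← mul_one (D.μR r), ← lik_sum_one h₀ h₁ (P₀ := P₀) (P₁ := P₁) (n := n) v]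
  congr 1
  rw [← Finset.sum_add_distrib]
  apply Finset.sum_congr rfl
  intro y _
  by_cases h : E r y <;> simp [h]

lemma dprob_compl (h₀ : IsProb P₀) (h₁ : IsProb P₁) (hA : 0 < A)
    (E : D.R → Fin A → (Fin (A + n - 1) → 𝒴) → Prop) :
    dprob P₀ P₁ D E + dprob P₀ P₁ D (fun r v y => ¬ E r v y) = 1 := by
  rw [dprob_eq_avg, dprob_eq_avg, ← mul_add, ← Finset.sum_add_distrib]
  rw [Finset.sum_congr rfl (fun v _ => dcondProb_compl h₀ h₁ v (fun r y => E r v y))]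
  rw [Finset.sum_const, Finset.card_univ, Fintype.card_fin, nsmul_eq_mul, mul_one]
  rw [inv_mul_cancel₀]
  exact Nat.cast_ne_zero.mpr hA.ne'

lemma dprob_add_le_one (h₀ : IsProb P₀) (h₁ : IsProb P₁) (hA : 0 < A)
    {E F : D.R → Fin A → (Fin (A + n - 1) → 𝒴) → Prop}
    (hdisj : ∀ r v y, E r v y → F r v y → False) :
    dprob P₀ P₁ D E + dprob P₀ P₁ D F ≤ 1 := by
  have h1 : dprob P₀ P₁ D F ≤ dprob P₀ P₁ D (fun r v y => ¬ E r v y) :=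
    dprob_mono h₀ h₁ (fun r v y hF hE => hdisj r v y hE hF)
  have h2 := dprob_compl h₀ h₁ hA (D := D) E
  linarith

lemma dprob_eq_zero {E : D.R → Fin A → (Fin (A + n - 1) → 𝒴) → Prop}
    (hE : ∀ r v y, ¬ E r v y) : dprob P₀ P₁ D E = 0 := by
  classical
  unfold dprob jointProb
  rw [Finset.sum_congr rfl (fun r _ => ?_)]
  · rw [Finset.sum_const, smul_zero]
  · rw [Finset.sum_congr rfl (fun v _ => ?_)]
    · rw [Finset.sum_const, smul_zero, mul_zero, mul_zero]
    · rw [Finset.sum_congr rfl (fun y _ => if_neg (hE r v y)), Finset.sum_const, smul_zero]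

/-- Change of measure: events determined outside the change window of `v` have equal
probability under `ℙ(·|ν = v)` and under `ℙ₀`. -/
lemma dcondProb_transfer (h₀ : IsProb P₀) (h₁ : IsProb P₁) (v : Fin A)
    {E : D.R → (Fin (A + n - 1) → 𝒴) → Prop}
    (hE : ∀ r (y y' : Fin (A + n - 1) → 𝒴),
      (∀ i : Fin (A + n - 1), ¬ (v.1 ≤ i.1 ∧ i.1 < v.1 + n) → y i = y' i) → E r y → E r y') :
    dcondProb P₀ P₁ D v E = dnullProb P₀ D E := by
  classical
  unfold dcondProb dnullProb nullProb
  apply Finset.sum_congr rfl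
  intro r _
  congr 1
  have hW : ∀ y : Fin (A + n - 1) → 𝒴, lik P₀ P₁ n v y
      = ∏ i, (if i ∈ Finset.univ.filter (fun i : Fin (A + n - 1) => v.1 ≤ i.1 ∧ i.1 < v.1 + n)
          then P₁ (y i) else P₀ (y i)) := by
    intro y
    unfold lik
    apply Finset.prod_congr rfl
    intro i _
    by_cases h : v.1 ≤ i.1 ∧ i.1 < v.1 + n <;> simp [h]
  calc (∑ y : Fin (A+n-1) → 𝒴, if E r y then lik P₀ P₁ n v y else 0)
      = ∑ y : Fin (A+n-1) → 𝒴, (if E r y then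
          ∏ i, (if i ∈ Finset.univ.filter (fun i : Fin (A + n - 1) => v.1 ≤ i.1 ∧ i.1 < v.1 + n)
            then P₁ (y i) else P₀ (y i)) else 0) := by
        apply Finset.sum_congr rfl
        intro y _
        by_cases h : E r y <;> simp [h, hW y]
    _ = ∑ y : Fin (A+n-1) → 𝒴, (if E r y then ∏ i, P₀ (y i) else 0) := by
        apply transfer_sum P₀ P₁ h₀ h₁ _ (E r)
        intro y y' hagree hEy
        apply hE r y y' _ hEy
        intro i hi
        apply hagree
        simp only [Finset.mem_filter, Finset.mem_univ, true_and]
        exact hi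

open Classical in
/-- Counting bound: the sum over `v ∈ V` of null probabilities is bounded by a uniform
bound on the number of `v ∈ V` for which the event occurs. -/
lemma sum_dnullProb_le (h₀ : IsProb P₀) (V : Finset (Fin A))
    (E : Fin A → D.R → (Fin (A + n - 1) → 𝒴) → Prop) (C : ℝ)
    (hcount : ∀ r y, ∃ B : Finset (Fin A), (∀ v ∈ V, E v r y → v ∈ B) ∧ ((B.card : ℝ) ≤ C)) :
    ∑ v ∈ V, dnullProb P₀ D (E v) ≤ C := by
  classical
  have hind : ∀ r y, (∑ v ∈ V, (if E v r y then (1:ℝ) else 0)) ≤ C := by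
    intro r y
    obtain ⟨B, hB, hBC⟩ := hcount r y
    calc ∑ v ∈ V, (if E v r y then (1:ℝ) else 0)
        = ((V.filter (fun v => E v r y)).card : ℝ) := by rw [Finset.sum_boole]
      _ ≤ (B.card : ℝ) := by
          have hsub : V.filter (fun v => E v r y) ⊆ B := by
            intro v hv
            rw [Finset.mem_filter] at hv
            exact hB v hv.1 hv.2
          exact_mod_cast Finset.card_le_card hsub
      _ ≤ C := hBC
  unfold dnullProb
  rw [Finset.sum_comm]
  have step : ∀ r : D.R, ∑ v ∈ V, D.μR r * nullProb P₀ (A+n-1) (E v r) ≤ D.μR r * C := by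
    intro r
    rw [← Finset.mul_sum]
    apply mul_le_mul_of_nonneg_left _ (D.μR_nonneg r)
    unfold nullProb
    rw [Finset.sum_comm]
    have inner : ∀ y : Fin (A+n-1) → 𝒴, ∑ v ∈ V, (if E v r y then ∏ i, P₀ (y i) else 0)
        = (∑ v ∈ V, (if E v r y then (1:ℝ) else 0)) * ∏ i, P₀ (y i) := by
      intro y
      rw [Finset.sum_mul]
      apply Finset.sum_congr rfl
      intro v _
      by_cases h : E v r y <;> simp [h]
    calc ∑ y : Fin (A+n-1) → 𝒴, ∑ v ∈ V, (if E v r y then ∏ i, P₀ (y i) else 0)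
        = ∑ y : Fin (A+n-1) → 𝒴, (∑ v ∈ V, (if E v r y then (1:ℝ) else 0)) * ∏ i, P₀ (y i) :=
          Finset.sum_congr rfl (fun y _ => inner y)
      _ ≤ ∑ y : Fin (A+n-1) → 𝒴, C * ∏ i, P₀ (y i) := by
          apply Finset.sum_le_sum; intro y _
          exact mul_le_mul_of_nonneg_right (hind r y) (prodP_nonneg h₀ y)
      _ = C := by rw [← Finset.mul_sum, prodP_sum_one h₀, mul_one]
  calc ∑ r, ∑ v ∈ V, D.μR r * nullProb P₀ (A+n-1) (E v r) ≤ ∑ r, D.μR r * C :=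
        Finset.sum_le_sum (fun r _ => step r)
    _ = C := by rw [← Finset.sum_mul, D.μR_sum, one_mul]

end DetectorProb2

section Causal

variable {A n : ℕ} {D : Detector 𝒴 A n}

lemma samp_filter_max (r : D.R) (y : Fin (A + n - 1) → 𝒴) :
    (D.samp r y).filter (· ≤ A + n - 1) = D.samp r y := by
  apply Finset.filter_true_of_mem
  intro t ht
  exact (Finset.mem_Icc.mp (D.samp_subset r y ht)).2

/-- If the observations agree at all sampled times, the whole trajectory is identical. -/
lemma causal_full (r : D.R) (y y' : Fin (A + n - 1) → 𝒴)
    (hagree : ∀ i : Fin (A + n - 1), i.1 + 1 ∈ D.samp r y → y i = y' i) :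
    D.samp r y' = D.samp r y ∧ D.tau r y' = D.tau r y := by
  have h := D.causal r y y' (A + n - 1) (fun i hi _ => hagree i hi)
  refine ⟨?_, h.2.1 (D.tau_le r y)⟩
  rw [← samp_filter_max r y', ← samp_filter_max r y]
  exact h.1

end Causal
section Cards

lemma interval_le_card_filter {A : ℕ} (a b : ℕ) (hb : b ≤ A) (p : Fin A → Prop)
    [DecidablePred p] (hp : ∀ v : Fin A, a ≤ v.1 → v.1 < b → p v) :
    b - a ≤ (Finset.univ.filter p).card := by
  rcases Nat.eq_zero_or_pos A with rfl | h0
  · have hb0 : b = 0 := by omega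
    subst hb0; simp
  · have hinj := Finset.card_le_card_of_injOn
      (fun i : ℕ => (⟨(a + i) % A, Nat.mod_lt _ h0⟩ : Fin A))
      (s := Finset.range (b - a)) (t := Finset.univ.filter p) ?_ ?_
    · simpa using hinj
    · intro i hi
      simp only [Finset.coe_range, Set.mem_Iio] at hi
      have hlt : a + i < A := by omega
      rw [Finset.mem_coe, Finset.mem_filter]
      refine ⟨Finset.mem_univ _, hp _ ?_ ?_⟩
      · simp [Nat.mod_eq_of_lt hlt]
      · simp [Nat.mod_eq_of_lt hlt]; omega
    · intro i hi j hj hij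
      simp only [Finset.coe_range, Set.mem_Iio] at hi hj
      have h1 : (a + i) % A = (a + j) % A := congrArg Fin.val hij
      rw [Nat.mod_eq_of_lt (by omega), Nat.mod_eq_of_lt (by omega)] at h1
      omega

lemma card_window_le {A : ℕ} (t n : ℕ) [DecidablePred fun v : Fin A => v.1 + 1 ≤ t ∧ t ≤ v.1 + n] :
    (Finset.univ.filter (fun v : Fin A => v.1 + 1 ≤ t ∧ t ≤ v.1 + n)).card ≤ n := by
  classical
  have hinj := Finset.card_le_card_of_injOn (fun v : Fin A => v.1)
    (s := Finset.univ.filter (fun v : Fin A => v.1 + 1 ≤ t ∧ t ≤ v.1 + n))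
    (t := Finset.Ico (t - n) t) ?_ ?_
  · rw [Nat.card_Ico] at hinj
    omega
  · intro v hv
    rw [Finset.mem_coe, Finset.mem_filter] at hv
    show v.1 ∈ Finset.Ico (t - n) t
    rw [Finset.mem_Ico]
    omega
  · intro v _ v' _ h
    exact Fin.val_injective h

end Cards
section MainBound

variable {P₀ P₁ : 𝒴 → ℝ} {A n : ℕ} {D : Detector 𝒴 A n}

/-- Restatement of the averaging identity for events not depending on `ν`. -/
lemma dprob_eq_avg' (E : D.R → (Fin (A + n - 1) → 𝒴) → Prop) :
    dprob P₀ P₁ D (fun r _ y => E r y)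
      = (A : ℝ)⁻¹ * ∑ v : Fin A, dcondProb P₀ P₁ D v E := by
  rw [dprob_eq_avg]

open Classical in
lemma main_bound (h₀ : IsProb P₀) (h₁ : IsProb P₁) (ρ ε x : ℝ)
    (hA64 : 64 ≤ A) (hAn : 16 * (n + 2) ≤ A)
    (hρ : 0 ≤ ρ) (hnρ : (n : ℝ) * ρ ≤ 1 / 100)
    (hε : ε ≤ 1 / 32)
    (hrate : 1 - ε ≤ dprob P₀ P₁ D (fun r ν y =>
        ((sampUpTo D r y (D.tau r y)).card : ℝ) / ((D.tau r y : ℕ) : ℝ) ≤ ρ))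
    (hfa : dfalseAlarm P₀ P₁ D ≤ 1 / 64)
    (hx : 0 ≤ x) (hxA : 16 * x ≤ (A : ℝ)) :
    (1/4 : ℝ) ≤ dprob P₀ P₁ D (fun r ν y => x ≤ ((D.tau r y : ℝ) - ((ν.1 : ℝ) + 1))) := by
  classical
  have hA0 : 0 < A := by omega
  have hAR : (0:ℝ) < (A:ℝ) := by exact_mod_cast hA0
  have hAR64 : (64:ℝ) ≤ (A:ℝ) := by exact_mod_cast hA64
  have hAnR : 16 * ((n:ℝ) + 2) ≤ (A:ℝ) := by exact_mod_cast hAn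
  set w : ℕ := A / 2 with hw
  set e : ℕ := A / 8 with he
  set u : ℕ := w + e with hu
  have hw1 : 2 * w ≤ A := by omega
  have hw2 : A ≤ 2 * w + 1 := by omega
  have he1 : 8 * e ≤ A := by omega
  have he2 : A ≤ 8 * e + 7 := by omega
  have hnw : n ≤ w := by omega
  have huA : u < A := by omega
  have hwA : w ≤ A := by omega
  have hw1R : 2 * (w:ℝ) ≤ (A:ℝ) := by exact_mod_cast hw1
  have hw2R : (A:ℝ) ≤ 2 * (w:ℝ) + 1 := by exact_mod_cast hw2
  have he1R : 8 * (e:ℝ) ≤ (A:ℝ) := by exact_mod_cast he1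
  have he2R : (A:ℝ) ≤ 8 * (e:ℝ) + 7 := by exact_mod_cast he2
  have hnR : 16 * ((n:ℝ) + 2) ≤ (A:ℝ) := hAnR
  set mstar : ℝ := ρ * ((A + n - 1 : ℕ) : ℝ) with hmstar
  have hmstar0 : 0 ≤ mstar := by
    apply mul_nonneg hρ (Nat.cast_nonneg _)
  -- K ⇒ sample counts are at most mstar
  have hKM : ∀ (r : D.R) (y : Fin (A + n - 1) → 𝒴) (t : ℕ),
      ((sampUpTo D r y (D.tau r y)).card : ℝ) / ((D.tau r y : ℕ) : ℝ) ≤ ρ →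
      ((((D.samp r y).filter (fun s => s ≤ t)).card : ℝ)) ≤ mstar := by
    intro r y t hK
    have htau1 : 1 ≤ D.tau r y := D.tau_pos r y
    have htauN : D.tau r y ≤ A + n - 1 := D.tau_le r y
    have htauR : (1:ℝ) ≤ ((D.tau r y : ℕ) : ℝ) := by exact_mod_cast htau1
    have hfull : sampUpTo D r y (D.tau r y) = D.samp r y := by
      unfold sampUpTo
      apply Finset.filter_true_of_mem
      intro s hs; exact D.samp_le_tau r y s hs
    rw [hfull, div_le_iff₀ (by linarith)] at hK
    have hfle : ((((D.samp r y).filter (fun s => s ≤ t)).card : ℝ)) ≤ ((D.samp r y).card : ℝ) := by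
      exact_mod_cast Finset.card_filter_le _ _
    have htauR2 : ((D.tau r y : ℕ) : ℝ) ≤ ((A + n - 1 : ℕ) : ℝ) := by exact_mod_cast htauN
    calc ((((D.samp r y).filter (fun s => s ≤ t)).card : ℝ)) ≤ ((D.samp r y).card : ℝ) := hfle
      _ ≤ ρ * ((D.tau r y : ℕ) : ℝ) := hK
      _ ≤ mstar := by rw [hmstar]; exact mul_le_mul_of_nonneg_left htauR2 hρ
  -- εbar
  set εbar : ℝ := dprob P₀ P₁ D (fun r ν y =>
      ¬ (((sampUpTo D r y (D.tau r y)).card : ℝ) / ((D.tau r y : ℕ) : ℝ) ≤ ρ)) with hεbar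
  have hεbar_le : εbar ≤ ε := by
    have h1 := dprob_compl h₀ h₁ hA0 (D := D) (fun r ν y =>
      ((sampUpTo D r y (D.tau r y)).card : ℝ) / ((D.tau r y : ℕ) : ℝ) ≤ ρ)
    rw [hεbar]; linarith
  have hεbar0 : 0 ≤ εbar := by
    rw [hεbar]; exact dprob_nonneg h₀ h₁ _
  -- false-alarm as average of null probabilities
  have hfa_avg : dfalseAlarm P₀ P₁ D
      = (A:ℝ)⁻¹ * ∑ v : Fin A, dnullProb P₀ D (fun r y => D.tau r y < v.1 + 1) := by
    unfold dfalseAlarm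
    rw [dprob_eq_avg]
    congr 1
    apply Finset.sum_congr rfl
    intro v _
    have htrans : dcondProb P₀ P₁ D v (fun r y => D.tau r y < v.1 + 1)
        = dnullProb P₀ D (fun r y => D.tau r y < v.1 + 1) := by
      apply dcondProb_transfer h₀ h₁ v
      intro r y y' hagree hlt
      have hag : ∀ i : Fin (A + n - 1), i.1 + 1 ∈ D.samp r y → i.1 + 1 ≤ v.1 → y i = y' i :=
        fun i _ hle => hagree i (by omega)
      have heq : D.tau r y' = D.tau r y := (D.causal r y y' v.1 hag).2.1 (by omega)
      omega
    exact htrans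
  have hfa0 : 0 ≤ dfalseAlarm P₀ P₁ D := dprob_nonneg h₀ h₁ _
  -- the null probability that τ ≤ u is at most 1/24
  set qfa : ℝ := dnullProb P₀ D (fun r y => D.tau r y ≤ u) with hqfa
  have hqfa0 : 0 ≤ qfa := dnullProb_nonneg h₀ _
  have hqfa_le : qfa ≤ 1 / 24 := by
    have hsum : ((A - u : ℕ) : ℝ) * qfa ≤ (A:ℝ) * dfalseAlarm P₀ P₁ D := by
      have hsub : ((A - u : ℕ)) ≤ (Finset.univ.filter (fun v : Fin A => u ≤ v.1)).card := by
        have := interval_le_card_filter u A (le_refl A) (fun v : Fin A => u ≤ v.1)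
          (fun v hv _ => hv)
        omega
      have hterm : ∀ v ∈ Finset.univ.filter (fun v : Fin A => u ≤ v.1),
          qfa ≤ dnullProb P₀ D (fun r y => D.tau r y < v.1 + 1) := by
        intro v hv
        rw [Finset.mem_filter] at hv
        rw [hqfa]
        apply dnullProb_mono h₀
        intro r y hy
        omega
      calc ((A - u : ℕ) : ℝ) * qfa
          ≤ ((Finset.univ.filter (fun v : Fin A => u ≤ v.1)).card : ℝ) * qfa := by
            apply mul_le_mul_of_nonneg_right _ hqfa0
            exact_mod_cast hsub
        _ = ∑ v ∈ Finset.univ.filter (fun v : Fin A => u ≤ v.1), qfa := by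
            rw [Finset.sum_const, nsmul_eq_mul]
        _ ≤ ∑ v ∈ Finset.univ.filter (fun v : Fin A => u ≤ v.1),
              dnullProb P₀ D (fun r y => D.tau r y < v.1 + 1) := Finset.sum_le_sum hterm
        _ ≤ ∑ v : Fin A, dnullProb P₀ D (fun r y => D.tau r y < v.1 + 1) := by
            apply Finset.sum_le_sum_of_subset_of_nonneg (Finset.filter_subset _ _)
            intro v _ _
            exact dnullProb_nonneg h₀ _
        _ = (A:ℝ) * dfalseAlarm P₀ P₁ D := by
            rw [hfa_avg, ← mul_assoc, mul_inv_cancel₀ hAR.ne', one_mul]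
    have hAu : ((A - u : ℕ) : ℝ) = (A:ℝ) - (u:ℝ) := by
      have huA' : u ≤ A := by omega
      exact Nat.cast_sub huA'
    have huR : (u:ℝ) = (w:ℝ) + (e:ℝ) := by exact_mod_cast rfl
    have h38 : 3 * (A:ℝ) / 8 ≤ ((A - u : ℕ) : ℝ) := by
      rw [hAu, huR]; linarith
    by_contra hcon
    push_neg at hcon
    have h2 : 3*(A:ℝ)/8 * (1/24) < 3*(A:ℝ)/8 * qfa :=
      mul_lt_mul_of_pos_left hcon (by linarith)
    have h3' : 3*(A:ℝ)/8 * qfa ≤ ((A - u : ℕ):ℝ) * qfa := by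
      apply mul_le_mul_of_nonneg_right _ hqfa0
      linarith [h38]
    have h4 : (A:ℝ) * dfalseAlarm P₀ P₁ D ≤ (A:ℝ) * (1/64) := mul_le_mul_of_nonneg_left hfa hAR.le
    linarith
  -- the null probability of a large sample count up to time w is at most 2ε
  set q : ℝ := dnullProb P₀ D (fun r y =>
      mstar < (((D.samp r y).filter (fun s => s ≤ w)).card : ℝ)) with hq
  have hq0 : 0 ≤ q := dnullProb_nonneg h₀ _
  have hq_le : q ≤ 2 * ε := by
    have htrans : ∀ v : Fin A, w ≤ v.1 →
        q ≤ dcondProb P₀ P₁ D v (fun r y =>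
          ¬ (((sampUpTo D r y (D.tau r y)).card : ℝ) / ((D.tau r y : ℕ) : ℝ) ≤ ρ)) := by
      intro v hv
      have heq : dcondProb P₀ P₁ D v (fun r y =>
          mstar < (((D.samp r y).filter (fun s => s ≤ w)).card : ℝ))
          = dnullProb P₀ D (fun r y =>
          mstar < (((D.samp r y).filter (fun s => s ≤ w)).card : ℝ)) := by
        apply dcondProb_transfer h₀ h₁ v
        intro r y y' hagree hlt
        have hag : ∀ i : Fin (A + n - 1), i.1 + 1 ∈ D.samp r y → i.1 + 1 ≤ w → y i = y' i :=
          fun i _ hle => hagree i (by omega)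
        have heqf : (D.samp r y').filter (· ≤ w) = (D.samp r y).filter (· ≤ w) :=
          (D.causal r y y' w hag).1
        have : ((D.samp r y').filter (fun s => s ≤ w)).card
            = ((D.samp r y).filter (fun s => s ≤ w)).card := by
          rw [show ((D.samp r y').filter (fun s => s ≤ w)) = ((D.samp r y').filter (· ≤ w)) from rfl,
            heqf]
        rw [show (((D.samp r y').filter (fun s => s ≤ w)).card : ℝ)
          = (((D.samp r y).filter (fun s => s ≤ w)).card : ℝ) by exact_mod_cast this]
        exact hlt
      rw [hq, ← heq]
      apply dcondProb_mono h₀ h₁ v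
      intro r y hy hK
      exact absurd (hKM r y w hK) (not_le.mpr hy)
    have hsum : ((A - w : ℕ) : ℝ) * q ≤ (A:ℝ) * εbar := by
      have hsub : ((A - w : ℕ)) ≤ (Finset.univ.filter (fun v : Fin A => w ≤ v.1)).card := by
        have := interval_le_card_filter w A (le_refl A) (fun v : Fin A => w ≤ v.1)
          (fun v hv _ => hv)
        omega
      calc ((A - w : ℕ) : ℝ) * q
          ≤ ((Finset.univ.filter (fun v : Fin A => w ≤ v.1)).card : ℝ) * q := by
            apply mul_le_mul_of_nonneg_right _ hq0
            exact_mod_cast hsub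
        _ = ∑ v ∈ Finset.univ.filter (fun v : Fin A => w ≤ v.1), q := by
            rw [Finset.sum_const, nsmul_eq_mul]
        _ ≤ ∑ v ∈ Finset.univ.filter (fun v : Fin A => w ≤ v.1),
              dcondProb P₀ P₁ D v (fun r y =>
                ¬ (((sampUpTo D r y (D.tau r y)).card : ℝ) / ((D.tau r y : ℕ) : ℝ) ≤ ρ)) := by
            apply Finset.sum_le_sum
            intro v hv
            rw [Finset.mem_filter] at hv
            exact htrans v hv.2
        _ ≤ ∑ v : Fin A, dcondProb P₀ P₁ D v (fun r y =>
                ¬ (((sampUpTo D r y (D.tau r y)).card : ℝ) / ((D.tau r y : ℕ) : ℝ) ≤ ρ)) := by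
            apply Finset.sum_le_sum_of_subset_of_nonneg (Finset.filter_subset _ _)
            intro v _ _
            exact dcondProb_nonneg h₀ h₁ _ _
        _ = (A:ℝ) * εbar := by
            rw [hεbar, dprob_eq_avg', ← mul_assoc, mul_inv_cancel₀ hAR.ne', one_mul]
    have hAw : ((A - w : ℕ) : ℝ) = (A:ℝ) - (w:ℝ) := Nat.cast_sub hwA
    by_contra hcon
    push_neg at hcon
    have h2 : (A:ℝ)/2 * (2*ε) < (A:ℝ)/2 * q :=
      mul_lt_mul_of_pos_left hcon (by linarith)
    have h3 : (A:ℝ)/2 * q ≤ ((A - w : ℕ):ℝ) * q := by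
      apply mul_le_mul_of_nonneg_right _ hq0
      rw [hAw]; linarith
    have h4 : (A:ℝ) * εbar ≤ (A:ℝ) * ε := mul_le_mul_of_nonneg_left hεbar_le hAR.le
    linarith
  -- change points whose window lies within [1, w]
  set V : Finset (Fin A) := Finset.univ.filter (fun v : Fin A => v.1 + n ≤ w) with hV
  have hVcard : ((w - n + 1 : ℕ)) ≤ V.card := by
    rw [hV]
    have h := interval_le_card_filter 0 (w - n + 1) (by omega) (fun v : Fin A => v.1 + n ≤ w)
      (fun v _ hv => by omega)
    simpa using h
  have hVcardR : 7 * (A:ℝ) / 16 ≤ (V.card : ℝ) := by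
    have h1 : ((w - n + 1 : ℕ) : ℝ) ≤ (V.card : ℝ) := by exact_mod_cast hVcard
    have h2 : ((w - n + 1 : ℕ) : ℝ) = (w:ℝ) - (n:ℝ) + 1 := by
      push_cast [Nat.cast_sub hnw]
      ring
    rw [h2] at h1
    linarith
  -- counting bound
  have hcountV : ∑ v ∈ V, dnullProb P₀ D (fun r y =>
      (¬ ∀ t ∈ D.samp r y, ¬ (v.1 + 1 ≤ t ∧ t ≤ v.1 + n)) ∧
        (((D.samp r y).filter (fun s => s ≤ w)).card : ℝ) ≤ mstar) ≤ (n:ℝ) * mstar := by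
    apply sum_dnullProb_le h₀
    intro r y
    by_cases hM : (((D.samp r y).filter (fun s => s ≤ w)).card : ℝ) ≤ mstar
    · refine ⟨((D.samp r y).filter (fun s => s ≤ w)).biUnion
          (fun t => Finset.univ.filter (fun v : Fin A => v.1 + 1 ≤ t ∧ t ≤ v.1 + n)), ?_, ?_⟩
      · intro v hvV hE
        obtain ⟨hbad, _⟩ := hE
        rw [hV, Finset.mem_filter] at hvV
        push_neg at hbad
        obtain ⟨t, ht, hwin⟩ := hbad
        rw [Finset.mem_biUnion]
        refine ⟨t, ?_, ?_⟩
        · rw [Finset.mem_filter]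
          exact ⟨ht, by omega⟩
        · rw [Finset.mem_filter]
          exact ⟨Finset.mem_univ _, hwin⟩
      · have hbi := Finset.card_biUnion_le (s := (D.samp r y).filter (fun s => s ≤ w))
          (t := fun t => Finset.univ.filter (fun v : Fin A => v.1 + 1 ≤ t ∧ t ≤ v.1 + n))
        have hsum_n : ∑ t ∈ (D.samp r y).filter (fun s => s ≤ w),
            (Finset.univ.filter (fun v : Fin A => v.1 + 1 ≤ t ∧ t ≤ v.1 + n)).card
            ≤ n * ((D.samp r y).filter (fun s => s ≤ w)).card := by
          calc ∑ t ∈ (D.samp r y).filter (fun s => s ≤ w),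
              (Finset.univ.filter (fun v : Fin A => v.1 + 1 ≤ t ∧ t ≤ v.1 + n)).card
              ≤ ∑ t ∈ (D.samp r y).filter (fun s => s ≤ w), n :=
                Finset.sum_le_sum (fun t _ => card_window_le t n)
            _ = ((D.samp r y).filter (fun s => s ≤ w)).card * n := by
                rw [Finset.sum_const, smul_eq_mul]
            _ = n * ((D.samp r y).filter (fun s => s ≤ w)).card := by ring
        have hnat := le_trans hbi hsum_n
        have hcast : ((((D.samp r y).filter (fun s => s ≤ w)).biUnion
            (fun t => Finset.univ.filter (fun v : Fin A => v.1 + 1 ≤ t ∧ t ≤ v.1 + n))).card : ℝ)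
            ≤ (n:ℝ) * (((D.samp r y).filter (fun s => s ≤ w)).card : ℝ) := by
          exact_mod_cast hnat
        calc ((((D.samp r y).filter (fun s => s ≤ w)).biUnion
            (fun t => Finset.univ.filter (fun v : Fin A => v.1 + 1 ≤ t ∧ t ≤ v.1 + n))).card : ℝ)
            ≤ (n:ℝ) * (((D.samp r y).filter (fun s => s ≤ w)).card : ℝ) := hcast
          _ ≤ (n:ℝ) * mstar := mul_le_mul_of_nonneg_left hM (Nat.cast_nonneg n)
    · refine ⟨∅, fun v _ hE => absurd hE.2 hM, ?_⟩
      simp only [Finset.card_empty, Nat.cast_zero]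
      exact mul_nonneg (Nat.cast_nonneg n) hmstar0
  -- transfer for the main event
  have htransG : ∀ v : Fin A, dcondProb P₀ P₁ D v (fun r y =>
      (∀ t ∈ D.samp r y, ¬ (v.1 + 1 ≤ t ∧ t ≤ v.1 + n)) ∧ u < D.tau r y)
      = dnullProb P₀ D (fun r y =>
      (∀ t ∈ D.samp r y, ¬ (v.1 + 1 ≤ t ∧ t ≤ v.1 + n)) ∧ u < D.tau r y) := by
    intro v
    apply dcondProb_transfer h₀ h₁ v
    intro r y y' hagree hE
    obtain ⟨hG, hτ⟩ := hE
    have hag : ∀ i : Fin (A + n - 1), i.1 + 1 ∈ D.samp r y → y i = y' i := by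
      intro i hi
      have := hG _ hi
      exact hagree i (by omega)
    obtain ⟨hs, ht⟩ := causal_full r y y' hag
    constructor
    · rw [hs]; exact hG
    · rw [ht]; exact hτ
  -- per-v lower bound
  have hperv : ∀ v ∈ V, (1:ℝ) - qfa - q
      - dnullProb P₀ D (fun r y =>
          (¬ ∀ t ∈ D.samp r y, ¬ (v.1 + 1 ≤ t ∧ t ≤ v.1 + n)) ∧
            (((D.samp r y).filter (fun s => s ≤ w)).card : ℝ) ≤ mstar)
      ≤ dcondProb P₀ P₁ D v (fun r y =>
          (∀ t ∈ D.samp r y, ¬ (v.1 + 1 ≤ t ∧ t ≤ v.1 + n)) ∧ u < D.tau r y) := by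
    intro v _
    rw [htransG v]
    have hcompl := dnullProb_compl h₀ (D := D) (E := fun r y =>
        (∀ t ∈ D.samp r y, ¬ (v.1 + 1 ≤ t ∧ t ≤ v.1 + n)) ∧ u < D.tau r y)
    have hsplit1 : dnullProb P₀ D (fun r y =>
        ¬ ((∀ t ∈ D.samp r y, ¬ (v.1 + 1 ≤ t ∧ t ≤ v.1 + n)) ∧ u < D.tau r y))
        ≤ dnullProb P₀ D (fun r y => D.tau r y ≤ u)
          + dnullProb P₀ D (fun r y => ¬ ∀ t ∈ D.samp r y, ¬ (v.1 + 1 ≤ t ∧ t ≤ v.1 + n)) := by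
      apply dnullProb_le_add h₀
      intro r y hy
      by_cases hG : ∀ t ∈ D.samp r y, ¬ (v.1 + 1 ≤ t ∧ t ≤ v.1 + n)
      · left
        by_contra hc
        exact hy ⟨hG, by omega⟩
      · right; exact hG
    have hsplit2 : dnullProb P₀ D (fun r y => ¬ ∀ t ∈ D.samp r y, ¬ (v.1 + 1 ≤ t ∧ t ≤ v.1 + n))
        ≤ dnullProb P₀ D (fun r y =>
            (¬ ∀ t ∈ D.samp r y, ¬ (v.1 + 1 ≤ t ∧ t ≤ v.1 + n)) ∧
              (((D.samp r y).filter (fun s => s ≤ w)).card : ℝ) ≤ mstar)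
          + q := by
      rw [hq]
      apply dnullProb_le_add h₀
      intro r y hy
      by_cases hM : (((D.samp r y).filter (fun s => s ≤ w)).card : ℝ) ≤ mstar
      · left; exact ⟨hy, hM⟩
      · right; exact not_le.mp hM
    linarith
  -- assembly
  have hmono : ∀ v ∈ V, dcondProb P₀ P₁ D v (fun r y =>
      (∀ t ∈ D.samp r y, ¬ (v.1 + 1 ≤ t ∧ t ≤ v.1 + n)) ∧ u < D.tau r y)
      ≤ dcondProb P₀ P₁ D v (fun r y => x ≤ ((D.tau r y : ℝ) - ((v.1 : ℝ) + 1))) := by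
    intro v hvV
    rw [hV, Finset.mem_filter] at hvV
    apply dcondProb_mono h₀ h₁ v
    intro r y hy
    obtain ⟨_, hτ⟩ := hy
    have hτ1 : u + 1 ≤ D.tau r y := hτ
    have hτR : ((u : ℕ) : ℝ) + 1 ≤ ((D.tau r y : ℕ) : ℝ) := by exact_mod_cast hτ1
    have hvR : (v.1 : ℝ) + (n : ℝ) ≤ (w : ℝ) := by exact_mod_cast hvV.2
    have huR : (u : ℝ) = (w : ℝ) + (e : ℝ) := by exact_mod_cast rfl
    have hn0 : (0:ℝ) ≤ (n : ℝ) := Nat.cast_nonneg n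
    linarith
  have hstep1 : ∑ v ∈ V, dcondProb P₀ P₁ D v (fun r y =>
      (∀ t ∈ D.samp r y, ¬ (v.1 + 1 ≤ t ∧ t ≤ v.1 + n)) ∧ u < D.tau r y)
      ≤ ∑ v : Fin A, dcondProb P₀ P₁ D v (fun r y => x ≤ ((D.tau r y : ℝ) - ((v.1 : ℝ) + 1))) := by
    calc ∑ v ∈ V, dcondProb P₀ P₁ D v (fun r y =>
        (∀ t ∈ D.samp r y, ¬ (v.1 + 1 ≤ t ∧ t ≤ v.1 + n)) ∧ u < D.tau r y)
        ≤ ∑ v ∈ V, dcondProb P₀ P₁ D v (fun r y => x ≤ ((D.tau r y : ℝ) - ((v.1 : ℝ) + 1))) :=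
          Finset.sum_le_sum hmono
      _ ≤ ∑ v : Fin A, dcondProb P₀ P₁ D v (fun r y => x ≤ ((D.tau r y : ℝ) - ((v.1 : ℝ) + 1))) := by
          rw [hV]
          apply Finset.sum_le_sum_of_subset_of_nonneg (Finset.filter_subset _ _)
          intro v _ _
          exact dcondProb_nonneg h₀ h₁ _ _
  have hsum_lower : (V.card : ℝ) * (1 - qfa - q) - (n:ℝ) * mstar
      ≤ ∑ v ∈ V, dcondProb P₀ P₁ D v (fun r y =>
          (∀ t ∈ D.samp r y, ¬ (v.1 + 1 ≤ t ∧ t ≤ v.1 + n)) ∧ u < D.tau r y) := by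
    have h1 : ∑ v ∈ V, ((1:ℝ) - qfa - q - dnullProb P₀ D (fun r y =>
          (¬ ∀ t ∈ D.samp r y, ¬ (v.1 + 1 ≤ t ∧ t ≤ v.1 + n)) ∧
            (((D.samp r y).filter (fun s => s ≤ w)).card : ℝ) ≤ mstar))
        ≤ ∑ v ∈ V, dcondProb P₀ P₁ D v (fun r y =>
          (∀ t ∈ D.samp r y, ¬ (v.1 + 1 ≤ t ∧ t ≤ v.1 + n)) ∧ u < D.tau r y) :=
      Finset.sum_le_sum hperv
    have h2 : ∑ v ∈ V, ((1:ℝ) - qfa - q - dnullProb P₀ D (fun r y =>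
          (¬ ∀ t ∈ D.samp r y, ¬ (v.1 + 1 ≤ t ∧ t ≤ v.1 + n)) ∧
            (((D.samp r y).filter (fun s => s ≤ w)).card : ℝ) ≤ mstar))
        = (V.card : ℝ) * (1 - qfa - q) - ∑ v ∈ V, dnullProb P₀ D (fun r y =>
          (¬ ∀ t ∈ D.samp r y, ¬ (v.1 + 1 ≤ t ∧ t ≤ v.1 + n)) ∧
            (((D.samp r y).filter (fun s => s ≤ w)).card : ℝ) ≤ mstar) := by
      rw [Finset.sum_sub_distrib, Finset.sum_const, nsmul_eq_mul]
    linarith [hcountV]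
  -- numeric conclusion
  have hnm : (n:ℝ) * mstar ≤ (A:ℝ) / 50 := by
    have hNle : ((A + n - 1 : ℕ) : ℝ) ≤ 2 * (A:ℝ) := by
      exact_mod_cast (by omega : A + n - 1 ≤ 2 * A)
    rw [hmstar]
    calc (n:ℝ) * (ρ * ((A + n - 1 : ℕ) : ℝ)) = ((n:ℝ) * ρ) * ((A + n - 1 : ℕ) : ℝ) := by ring
      _ ≤ (1/100) * (2 * (A:ℝ)) :=
          mul_le_mul hnρ hNle (Nat.cast_nonneg _) (by norm_num)
      _ = (A:ℝ) / 50 := by ring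
  have h1mq : (43/48 : ℝ) ≤ 1 - qfa - q := by linarith
  have hVineq : 7 * (A:ℝ) / 16 * (43/48) ≤ (V.card : ℝ) * (1 - qfa - q) :=
    mul_le_mul hVcardR h1mq (by norm_num) (Nat.cast_nonneg _)
  have hS : (A:ℝ) / 4 ≤ ∑ v : Fin A,
      dcondProb P₀ P₁ D v (fun r y => x ≤ ((D.tau r y : ℝ) - ((v.1 : ℝ) + 1))) := by
    linarith
  have hgoal : dprob P₀ P₁ D (fun r ν y => x ≤ ((D.tau r y : ℝ) - ((ν.1 : ℝ) + 1)))
      = (A:ℝ)⁻¹ * ∑ v : Fin A,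
        dcondProb P₀ P₁ D v (fun r y => x ≤ ((D.tau r y : ℝ) - ((v.1 : ℝ) + 1))) :=
    dprob_eq_avg _
  rw [hgoal]
  calc (1/4 : ℝ) = (A:ℝ)⁻¹ * ((A:ℝ) / 4) := by field_simp
    _ ≤ (A:ℝ)⁻¹ * ∑ v : Fin A,
        dcondProb P₀ P₁ D v (fun r y => x ≤ ((D.tau r y : ℝ) - ((v.1 : ℝ) + 1))) :=
      mul_le_mul_of_nonneg_left hS (by positivity)

end MainBound
/-- Detection, sparse sampling, converse: exponential delay.
Fix `α > 0` and sampling rates with `n·ρ n → 0`.  If detectors operating at uncertainty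
level `A_n = ⌈2^(αn)⌉` satisfy, for some `ε n → 0`, eventually
`ℙ(|𝒮^{≤τ}|/τ ≤ ρ n) ≥ 1 - ε n`, and their false-alarm probability vanishes, then the
delay is exponential in `n`: there are `δ > 0` and `c > 0` with
`ℙ(τ - ν ≥ c·2^(αn)) ≥ δ` for all large `n`; consequently for every `ε ∈ (0, δ)` and all
large `n`, `d((𝒮 n, τ n), ε) ≥ c·2^(αn)`. -/
theorem statement5 {𝒴 : Type} [Fintype 𝒴] (P₀ P₁ : 𝒴 → ℝ)
    (h₀ : IsProb P₀) (h₁ : IsProb P₁) (hac : ∀ y, P₀ y = 0 → P₁ y = 0)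
    (hD : 0 < KL P₁ P₀) (α : ℝ) (hα : 0 < α)
    (ρ : ℕ → ℝ)
    (hρ0 : Filter.Tendsto (fun n : ℕ => (n : ℝ) * ρ n) Filter.atTop (nhds 0))
    (D : ∀ n : ℕ, Detector 𝒴 (Alevel α n) n)
    (ε : ℕ → ℝ) (hε : Filter.Tendsto ε Filter.atTop (nhds 0))
    (hrate : ∀ᶠ n in Filter.atTop,
      1 - ε n ≤ dprob P₀ P₁ (D n) (fun r ν y =>
        ((sampUpTo (D n) r y ((D n).tau r y)).card : ℝ) / ((D n).tau r y : ℝ) ≤ ρ n))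
    (hfa : Filter.Tendsto (fun n => dfalseAlarm P₀ P₁ (D n)) Filter.atTop (nhds 0)) :
    ∃ δ > (0 : ℝ), ∃ c > (0 : ℝ),
      (∀ᶠ n : ℕ in Filter.atTop,
        δ ≤ dprob P₀ P₁ (D n) (fun r ν y =>
          c * 2 ^ (α * n) ≤ ((D n).tau r y : ℝ) - ((ν.1 : ℝ) + 1))) ∧
      ∀ ε' : ℝ, 0 < ε' → ε' < δ →
        ∀ᶠ n : ℕ in Filter.atTop, c * 2 ^ (α * n) ≤ (ddelay P₀ P₁ (D n) ε' : ℝ) := by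
  classical
  -- eventual bounds from the limit hypotheses
  have hεev : ∀ᶠ n in Filter.atTop, ε n ≤ 1 / 32 :=
    hε.eventually (eventually_le_nhds (by norm_num : (0:ℝ) < 1/32))
  have hfaev : ∀ᶠ n in Filter.atTop, dfalseAlarm P₀ P₁ (D n) ≤ 1 / 64 :=
    hfa.eventually (eventually_le_nhds (by norm_num : (0:ℝ) < 1/64))
  have hnρev : ∀ᶠ n : ℕ in Filter.atTop, (n : ℝ) * ρ n ≤ 1 / 100 :=
    hρ0.eventually (eventually_le_nhds (by norm_num : (0:ℝ) < 1/100))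
  -- exponential growth beats the linear requirements
  have hc : 0 < α * Real.log 2 := mul_pos hα (Real.log_pos one_lt_two)
  have hgrow : ∀ᶠ n : ℕ in Filter.atTop,
      16 * ((n : ℝ) + 2) + 64 ≤ (2 : ℝ) ^ (α * n) := by
    have h1 : Filter.Tendsto (fun n : ℕ => (α * Real.log 2) * n) Filter.atTop Filter.atTop := by
      exact Filter.Tendsto.const_mul_atTop hc tendsto_natCast_atTop_atTop
    have h2 : Filter.Tendsto (fun x : ℝ => Real.exp x / x) Filter.atTop Filter.atTop := by
      simpa using Real.tendsto_exp_div_pow_atTop 1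
    have h3 := (h2.comp h1).eventually_ge_atTop (112 / (α * Real.log 2))
    filter_upwards [h3, Filter.eventually_ge_atTop 1] with n h4 hn1
    have hn1R : (1:ℝ) ≤ (n:ℝ) := by exact_mod_cast hn1
    have hcn : 0 < (α * Real.log 2) * n := by positivity
    have h5 : 112 / (α * Real.log 2) ≤ Real.exp ((α * Real.log 2) * n) / ((α * Real.log 2) * n) := h4
    have h6 : 112 * (n:ℝ) ≤ Real.exp ((α * Real.log 2) * n) := by
      rw [div_le_div_iff₀ hc hcn] at h5
      have h5' : (112 * (n:ℝ)) * (α * Real.log 2)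
          ≤ Real.exp ((α * Real.log 2) * (n:ℝ)) * (α * Real.log 2) := by
        calc (112 * (n:ℝ)) * (α * Real.log 2) = 112 * ((α * Real.log 2) * (n:ℝ)) := by ring
          _ ≤ Real.exp ((α * Real.log 2) * (n:ℝ)) * (α * Real.log 2) := h5
      exact le_of_mul_le_mul_right h5' hc
    have h7 : (2:ℝ) ^ (α * (n:ℝ)) = Real.exp ((α * Real.log 2) * n) := by
      rw [Real.rpow_def_of_pos (by norm_num : (0:ℝ) < 2)]
      congr 1
      ring
    rw [h7]
    linarith
  -- package: for large n all hypotheses of main_bound hold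
  have hmain_ev : ∀ᶠ n : ℕ in Filter.atTop,
      (1/4 : ℝ) ≤ dprob P₀ P₁ (D n) (fun r ν y =>
        1/16 * 2 ^ (α * n) ≤ ((D n).tau r y : ℝ) - ((ν.1 : ℝ) + 1)) := by
    filter_upwards [hrate, hεev, hfaev, hnρev, hgrow] with n hrn hen hfan hnρn hgn
    have hx2 : (0:ℝ) < (2:ℝ) ^ (α * n) := Real.rpow_pos_of_pos (by norm_num) _
    have hA2 : (2:ℝ) ^ (α * n) ≤ ((Alevel α n : ℕ) : ℝ) := Nat.le_ceil _
    have hnn : (0:ℝ) ≤ (n:ℝ) := Nat.cast_nonneg n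
    have hA64 : 64 ≤ Alevel α n := by
      have : (64:ℝ) ≤ ((Alevel α n : ℕ) : ℝ) := by linarith
      exact_mod_cast this
    have hAn : 16 * (n + 2) ≤ Alevel α n := by
      have : ((16 * (n + 2) : ℕ) : ℝ) ≤ ((Alevel α n : ℕ) : ℝ) := by push_cast; linarith
      exact_mod_cast this
    -- ρ n must be nonnegative
    have hρn : 0 ≤ ρ n := by
      by_contra hneg
      push_neg at hneg
      have hzero : dprob P₀ P₁ (D n) (fun r ν y =>
          ((sampUpTo (D n) r y ((D n).tau r y)).card : ℝ) / ((D n).tau r y : ℝ) ≤ ρ n) = 0 := by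
        apply dprob_eq_zero
        intro r v y hle
        have h1 : (0:ℝ) ≤ ((sampUpTo (D n) r y ((D n).tau r y)).card : ℝ) / ((D n).tau r y : ℝ) :=
          div_nonneg (Nat.cast_nonneg _) (Nat.cast_nonneg _)
        linarith
      rw [hzero] at hrn
      linarith
    exact main_bound h₀ h₁ (ρ n) (ε n) (1/16 * 2 ^ (α * n)) hA64 hAn hρn hnρn hen hrn hfan
      (by positivity) (by linarith)
  refine ⟨1/4, by norm_num, 1/16, by norm_num, hmain_ev, ?_⟩
  intro ε' hε'0 hε'δ
  filter_upwards [hmain_ev] with n hmain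
  have hA0 : 0 < Alevel α n := by
    apply Nat.ceil_pos.mpr
    exact Real.rpow_pos_of_pos (by norm_num) _
  have hmem : (Alevel α n + n) ∈ {l : ℕ | 1 - ε' ≤ dprob P₀ P₁ (D n)
      (fun r ν y => (D n).tau r y < ν.1 + 1 + l)} := by
    have hone : dprob P₀ P₁ (D n) (fun r ν y => (D n).tau r y < ν.1 + 1 + (Alevel α n + n)) = 1 := by
      apply dprob_one h₀ h₁ hA0
      intro r v y
      have := (D n).tau_le r y
      omega
    simp only [Set.mem_setOf_eq, hone]
    linarith
  have hlb : ∀ l ∈ {l : ℕ | 1 - ε' ≤ dprob P₀ P₁ (D n)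
      (fun r ν y => (D n).tau r y < ν.1 + 1 + l)}, 1/16 * 2 ^ (α * n) ≤ (l : ℝ) := by
    intro l hl
    by_contra hcon
    push_neg at hcon
    have hdisj : dprob P₀ P₁ (D n) (fun r ν y => (D n).tau r y < ν.1 + 1 + l)
        + dprob P₀ P₁ (D n) (fun r ν y =>
          1/16 * 2 ^ (α * n) ≤ ((D n).tau r y : ℝ) - ((ν.1 : ℝ) + 1)) ≤ 1 := by
      apply dprob_add_le_one h₀ h₁ hA0
      intro r v y hlt hge
      have h1 : (D n).tau r y ≤ v.1 + l := by omega
      have h1R : (((D n).tau r y : ℕ) : ℝ) ≤ (v.1 : ℝ) + (l : ℝ) := by exact_mod_cast h1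
      linarith
    rw [Set.mem_setOf_eq] at hl
    linarith
  have hsinf : ddelay P₀ P₁ (D n) ε' ∈ {l : ℕ | 1 - ε' ≤ dprob P₀ P₁ (D n)
      (fun r ν y => (D n).tau r y < ν.1 + 1 + l)} := Nat.sInf_mem ⟨_, hmem⟩
  exact hlb _ hsinf

end ChangeDetect
end
end

section
/- For any detector (𝒮_n, τ_n) operating at uncertainty level A_n, any real x ≥ 0, and any integer k ∈ {1,…,A_n−1}: ℙ₀(|𝒮^{≤k}| ≤ x) ≥ (ℙ(|𝒮^{≤τ_n}| ≤ x) − k/A_n) · A_n/(A_n − k), where ℙ₀ denotes the law obtained when the detector is run on an observation sequence that is i.i.d. P₀ throughout. Equivalently, ℙ(|𝒮^{≤τ_n}| ≤ x) ≤ ℙ₀(|𝒮^{≤k}| ≤ x)·(A_n − k)/A_n + k/A_n. -/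
open Filter Finset

noncomputable section

namespace ChangeDetect

variable {𝒴 : Type} [Fintype 𝒴]

section AuxMarg

variable {𝒴 : Type} [Fintype 𝒴]

/-- Sum over a product space of a product of normalized weights is 1. -/
lemma sum_pi_prod {ι : Type} [Fintype ι] [DecidableEq ι] (w : ι → 𝒴 → ℝ)
    (hw : ∀ i, ∑ a, w i a = 1) :
    ∑ y : ι → 𝒴, ∏ i, w i (y i) = 1 := by
  rw [← Fintype.prod_sum w]
  simp [hw]

/-- Marginalization: if `f` depends only on coordinates satisfying `p`, then the
expectation of `f` under a product of normalized weights only involves the weights at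
coordinates in `p`. -/
lemma sum_mul_prod_marg {T : ℕ} [Nonempty 𝒴] (p : Fin T → Prop) [DecidablePred p]
    (f : (Fin T → 𝒴) → ℝ)
    (hf : ∀ y y' : Fin T → 𝒴, (∀ i, p i → y i = y' i) → f y = f y')
    (w : Fin T → 𝒴 → ℝ) (hw : ∀ i, ∑ a, w i a = 1) :
    ∑ y : Fin T → 𝒴, f y * ∏ i, w i (y i)
      = ∑ a : {i : Fin T // p i} → 𝒴,
          (f (fun i => if h : p i then a ⟨i, h⟩ else Classical.arbitrary 𝒴)
            * ∏ i : {i : Fin T // p i}, w i.1 (a i)) := by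
  classical
  set e := Equiv.piEquivPiSubtypeProd p (fun _ : Fin T => 𝒴) with he
  rw [← Equiv.sum_comp e.symm (fun y : Fin T → 𝒴 => f y * ∏ i, w i (y i)),
    Fintype.sum_prod_type]
  refine Finset.sum_congr rfl fun a _ => ?_
  have hfa : ∀ b : {i : Fin T // ¬ p i} → 𝒴,
      f (e.symm (a, b)) = f (fun i => if h : p i then a ⟨i, h⟩ else Classical.arbitrary 𝒴) := by
    intro b
    apply hf
    intro i hi
    simp [he, Equiv.piEquivPiSubtypeProd, hi]
  have hsplit : ∀ b : {i : Fin T // ¬ p i} → 𝒴,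
      (∏ i, w i (e.symm (a, b) i))
        = (∏ i : {i : Fin T // p i}, w i.1 (a i))
            * ∏ i : {i : Fin T // ¬ p i}, w i.1 (b i) := by
    intro b
    rw [← Fintype.prod_subtype_mul_prod_subtype p (fun i => w i (e.symm (a, b) i))]
    congr 1
    · exact Finset.prod_congr rfl fun i _ => by
        simp [he, Equiv.piEquivPiSubtypeProd, i.2]
    · exact Finset.prod_congr rfl fun i _ => by
        simp [he, Equiv.piEquivPiSubtypeProd, i.2]
  calc (∑ b : {i : Fin T // ¬ p i} → 𝒴,
          f (e.symm (a, b)) * ∏ i, w i (e.symm (a, b) i))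
      = ∑ b : {i : Fin T // ¬ p i} → 𝒴,
          (f (fun i => if h : p i then a ⟨i, h⟩ else Classical.arbitrary 𝒴)
            * ∏ i : {i : Fin T // p i}, w i.1 (a i))
            * ∏ i : {i : Fin T // ¬ p i}, w i.1 (b i) := by
        refine Finset.sum_congr rfl fun b _ => ?_
        rw [hfa b, hsplit b, mul_assoc]
    _ = _ := by
        rw [← Finset.mul_sum,
          sum_pi_prod (fun i : {i : Fin T // ¬ p i} => w i.1) (fun i => hw i.1), mul_one]

end AuxMarg

/-- Comparing the number of samples under `ℙ` and under `ℙ₀`.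
For any detector operating at uncertainty level `A_n = ⌈2^(αn)⌉`, any `x ≥ 0` and any
`k ∈ {1,…,A_n-1}`:
`ℙ₀(|𝒮^{≤k}| ≤ x) ≥ (ℙ(|𝒮^{≤τ}| ≤ x) - k/A_n)·A_n/(A_n - k)`, equivalently
`ℙ(|𝒮^{≤τ}| ≤ x) ≤ ℙ₀(|𝒮^{≤k}| ≤ x)·(A_n - k)/A_n + k/A_n`, where `ℙ₀` is the law
obtained when the detector is run on an i.i.d.-`P₀` observation sequence. -/
theorem statement14 {𝒴 : Type} [Fintype 𝒴] (P₀ P₁ : 𝒴 → ℝ)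
    (h₀ : IsProb P₀) (h₁ : IsProb P₁) (hac : ∀ y, P₀ y = 0 → P₁ y = 0)
    (hD : 0 < KL P₁ P₀) (α : ℝ) (hα : 0 < α) (n : ℕ) (hn : 1 ≤ n)
    (D : Detector 𝒴 (Alevel α n) n)
    (x : ℝ) (hx : 0 ≤ x) (k : ℕ) (hk1 : 1 ≤ k) (hk2 : k < Alevel α n) :
    ((dprob P₀ P₁ D fun r ν y => ((sampUpTo D r y (D.tau r y)).card : ℝ) ≤ x) -
        (k : ℝ) / (Alevel α n : ℝ)) * (Alevel α n : ℝ) / ((Alevel α n : ℝ) - k)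
      ≤ dnullProb P₀ D (fun r y => ((sampUpTo D r y k).card : ℝ) ≤ x) ∧
    (dprob P₀ P₁ D fun r ν y => ((sampUpTo D r y (D.tau r y)).card : ℝ) ≤ x)
      ≤ dnullProb P₀ D (fun r y => ((sampUpTo D r y k).card : ℝ) ≤ x) *
          ((Alevel α n : ℝ) - k) / (Alevel α n : ℝ) + (k : ℝ) / (Alevel α n : ℝ) := by
  classical
  have hY : Nonempty 𝒴 := by
    rcases isEmpty_or_nonempty 𝒴 with h | h
    · exfalso; have := h₀.2; simp at this
    · exact h
  revert D hk2
  generalize Alevel α n = A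
  intro D hk2
  set T := A + n - 1 with hT
  have hA0 : 0 < A := lt_of_le_of_lt (Nat.zero_le k) hk2
  have hAreal : (0:ℝ) < (A:ℝ) := by exact_mod_cast hA0
  have hkA : (k:ℝ) < (A:ℝ) := by exact_mod_cast hk2
  have hAk : (0:ℝ) < (A:ℝ) - (k:ℝ) := by linarith
  -- nonnegativity of the likelihood
  have hlik_nonneg : ∀ (v : Fin A) (y : Fin T → 𝒴), 0 ≤ lik P₀ P₁ n v y := by
    intro v y
    refine Finset.prod_nonneg fun i _ => ?_
    split_ifs
    · exact h₁.1 _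
    · exact h₀.1 _
  -- event monotonicity
  have hmono : ∀ r (y : Fin T → 𝒴),
      ((sampUpTo D r y (D.tau r y)).card : ℝ) ≤ x → ((sampUpTo D r y k).card : ℝ) ≤ x := by
    intro r y h
    refine le_trans ?_ h
    have h1 : sampUpTo D r y (D.tau r y) = D.samp r y :=
      Finset.filter_true_of_mem fun t ht => D.samp_le_tau r y t ht
    have h2 : sampUpTo D r y k ⊆ sampUpTo D r y (D.tau r y) := by
      rw [h1]; exact Finset.filter_subset _ _
    exact_mod_cast Finset.card_le_card h2
  -- the indicator of the event |𝒮^{≤k}| ≤ x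
  set f : D.R → (Fin T → 𝒴) → ℝ :=
    fun r y => if ((sampUpTo D r y k).card : ℝ) ≤ x then (1:ℝ) else 0 with hfdef
  have hfr : ∀ r (y y' : Fin T → 𝒴), (∀ i : Fin T, i.1 < k → y i = y' i) → f r y = f r y' := by
    intro r y y' h
    have hs : sampUpTo D r y' k = sampUpTo D r y k :=
      (D.causal r y y' k (fun i _ hle => h i (by omega))).1
    simp only [hfdef, sampUpTo] at *
    simp only [hs]
    congr
  set N : D.R → ℝ := fun r => nullProb P₀ T (fun y => ((sampUpTo D r y k).card : ℝ) ≤ x)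
    with hNdef
  -- main per-seed bound
  have key : ∀ r, jointProb P₀ P₁ n A (fun (_ : Fin A) y =>
        ((sampUpTo D r y (D.tau r y)).card : ℝ) ≤ x)
      ≤ (A:ℝ)⁻¹ * ((k:ℝ) + ((A:ℝ) - k) * N r) := by
    intro r
    rw [jointProb]
    refine mul_le_mul_of_nonneg_left ?_ (by positivity)
    have step1 : ∀ v : Fin A,
        (∑ y : Fin T → 𝒴, if ((sampUpTo D r y (D.tau r y)).card : ℝ) ≤ x
            then lik P₀ P₁ n v y else 0)
        ≤ ∑ y : Fin T → 𝒴, if ((sampUpTo D r y k).card : ℝ) ≤ x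
            then lik P₀ P₁ n v y else 0 := by
      intro v
      refine Finset.sum_le_sum fun y _ => ?_
      split_ifs with h1 h2
      · exact le_refl _
      · exact absurd (hmono r y h1) h2
      · exact hlik_nonneg v y
      · exact le_refl _
    have step2 : ∀ v : Fin A,
        (∑ y : Fin T → 𝒴, if ((sampUpTo D r y k).card : ℝ) ≤ x
            then lik P₀ P₁ n v y else 0) ≤ 1 := by
      intro v
      have h1 : (∑ y : Fin T → 𝒴, if ((sampUpTo D r y k).card : ℝ) ≤ x
            then lik P₀ P₁ n v y else 0) ≤ ∑ y : Fin T → 𝒴, lik P₀ P₁ n v y := by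
        refine Finset.sum_le_sum fun y _ => ?_
        split_ifs
        · exact le_refl _
        · exact hlik_nonneg v y
      refine h1.trans (le_of_eq ?_)
      exact sum_pi_prod
        (fun (i : Fin T) (a : 𝒴) => if v.1 ≤ i.1 ∧ i.1 < v.1 + n then P₁ a else P₀ a)
        (fun i => by by_cases h : v.1 ≤ i.1 ∧ i.1 < v.1 + n <;> simp [h, h₀.2, h₁.2])
    have step3 : ∀ v : Fin A, k ≤ v.1 →
        (∑ y : Fin T → 𝒴, if ((sampUpTo D r y k).card : ℝ) ≤ x
            then lik P₀ P₁ n v y else 0) = N r := by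
      intro v hv
      have hw₁ : ∀ i : Fin T,
          ∑ a, (if v.1 ≤ i.1 ∧ i.1 < v.1 + n then P₁ a else P₀ a) = 1 := by
        intro i; by_cases h : v.1 ≤ i.1 ∧ i.1 < v.1 + n <;> simp [h, h₀.2, h₁.2]
      have eL : (∑ y : Fin T → 𝒴, if ((sampUpTo D r y k).card : ℝ) ≤ x
            then lik P₀ P₁ n v y else 0)
          = ∑ y : Fin T → 𝒴, f r y *
              ∏ i, (if v.1 ≤ i.1 ∧ i.1 < v.1 + n then P₁ (y i) else P₀ (y i)) := by
        refine Finset.sum_congr rfl fun y _ => ?_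
        simp only [hfdef]
        split_ifs with h
        · rw [one_mul]; rfl
        · rw [zero_mul]
      have eR : N r = ∑ y : Fin T → 𝒴, f r y * ∏ i, P₀ (y i) := by
        rw [hNdef]; simp only [nullProb]
        refine Finset.sum_congr rfl fun y _ => ?_
        simp only [hfdef]
        split_ifs with h
        · rw [one_mul]
        · rw [zero_mul]
      rw [eL, eR,
        sum_mul_prod_marg (fun i : Fin T => i.1 < k) (f r) (hfr r)
          (fun i a => if v.1 ≤ i.1 ∧ i.1 < v.1 + n then P₁ a else P₀ a) hw₁,
        sum_mul_prod_marg (fun i : Fin T => i.1 < k) (f r) (hfr r)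
          (fun _ => P₀) (fun _ => h₀.2)]
      refine Finset.sum_congr rfl fun a _ => ?_
      congr 1
      refine Finset.prod_congr rfl fun i _ => ?_
      have : ¬ (v.1 ≤ i.1.1 ∧ i.1.1 < v.1 + n) := by
        have := i.2; omega
      rw [if_neg this]
    -- counting
    have hcard : (Finset.univ.filter (fun v : Fin A => v.1 < k)).card = k := by
      have : Finset.univ.filter (fun v : Fin A => v.1 < k)
          = Finset.Iio (⟨k, hk2⟩ : Fin A) := by
        ext v; simp [Fin.lt_def]
      rw [this, Fin.card_Iio]
    have hcard' : (Finset.univ.filter (fun v : Fin A => ¬ v.1 < k)).card = A - k := by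
      have := Finset.card_filter_add_card_filter_not
        (s := (Finset.univ : Finset (Fin A))) (p := fun v : Fin A => v.1 < k)
      rw [hcard] at this
      simp only [Finset.card_univ, Fintype.card_fin] at this
      omega
    calc (∑ v : Fin A, ∑ y : Fin T → 𝒴,
            if ((sampUpTo D r y (D.tau r y)).card : ℝ) ≤ x then lik P₀ P₁ n v y else 0)
        ≤ ∑ v : Fin A, ∑ y : Fin T → 𝒴,
            if ((sampUpTo D r y k).card : ℝ) ≤ x then lik P₀ P₁ n v y else 0 :=
          Finset.sum_le_sum fun v _ => step1 v
      _ = (∑ v ∈ Finset.univ.filter (fun v : Fin A => v.1 < k), ∑ y : Fin T → 𝒴,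
            if ((sampUpTo D r y k).card : ℝ) ≤ x then lik P₀ P₁ n v y else 0)
          + ∑ v ∈ Finset.univ.filter (fun v : Fin A => ¬ v.1 < k), ∑ y : Fin T → 𝒴,
            if ((sampUpTo D r y k).card : ℝ) ≤ x then lik P₀ P₁ n v y else 0 :=
          (Finset.sum_filter_add_sum_filter_not _ _ _).symm
      _ ≤ (k : ℝ) + ((A:ℝ) - k) * N r := by
          have b1 : (∑ v ∈ Finset.univ.filter (fun v : Fin A => v.1 < k),
              ∑ y : Fin T → 𝒴,
                if ((sampUpTo D r y k).card : ℝ) ≤ x then lik P₀ P₁ n v y else 0)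
              ≤ (k : ℝ) := by
            have := Finset.sum_le_card_nsmul
              (Finset.univ.filter (fun v : Fin A => v.1 < k))
              (fun v => ∑ y : Fin T → 𝒴,
                if ((sampUpTo D r y k).card : ℝ) ≤ x then lik P₀ P₁ n v y else 0)
              1 (fun v _ => step2 v)
            rw [hcard] at this
            simpa using this
          have b2 : (∑ v ∈ Finset.univ.filter (fun v : Fin A => ¬ v.1 < k),
              ∑ y : Fin T → 𝒴,
                if ((sampUpTo D r y k).card : ℝ) ≤ x then lik P₀ P₁ n v y else 0)
              = ((A:ℝ) - k) * N r := by
            rw [Finset.sum_congr rfl (fun v hv => step3 v (by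
              simpa using (Finset.mem_filter.mp hv).2)),
              Finset.sum_const, hcard', nsmul_eq_mul, Nat.cast_sub hk2.le]
          linarith [b2.le, b2.ge, b1]
  -- global bound
  have main : (dprob P₀ P₁ D fun r ν y => ((sampUpTo D r y (D.tau r y)).card : ℝ) ≤ x)
      ≤ (A:ℝ)⁻¹ * (k:ℝ) + (A:ℝ)⁻¹ * ((A:ℝ) - k) *
          dnullProb P₀ D (fun r y => ((sampUpTo D r y k).card : ℝ) ≤ x) := by
    have h1 : (dprob P₀ P₁ D fun r ν y => ((sampUpTo D r y (D.tau r y)).card : ℝ) ≤ x)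
        ≤ ∑ r, D.μR r * ((A:ℝ)⁻¹ * ((k:ℝ) + ((A:ℝ) - k) * N r)) := by
      refine Finset.sum_le_sum fun r _ => ?_
      exact mul_le_mul_of_nonneg_left (key r) (D.μR_nonneg r)
    have h2 : (∑ r, D.μR r * ((A:ℝ)⁻¹ * ((k:ℝ) + ((A:ℝ) - k) * N r)))
        = (A:ℝ)⁻¹ * (k:ℝ) * (∑ r, D.μR r)
          + (A:ℝ)⁻¹ * ((A:ℝ) - k) * ∑ r, D.μR r * N r := by
      rw [Finset.mul_sum, Finset.mul_sum, ← Finset.sum_add_distrib]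
      exact Finset.sum_congr rfl fun r _ => by ring
    have h3 : dnullProb P₀ D (fun r y => ((sampUpTo D r y k).card : ℝ) ≤ x)
        = ∑ r, D.μR r * N r := rfl
    calc _ ≤ ∑ r, D.μR r * ((A:ℝ)⁻¹ * ((k:ℝ) + ((A:ℝ) - k) * N r)) := h1
      _ = _ := by rw [h2, D.μR_sum, mul_one, h3]
  have goal2 : (dprob P₀ P₁ D fun r ν y => ((sampUpTo D r y (D.tau r y)).card : ℝ) ≤ x)
      ≤ dnullProb P₀ D (fun r y => ((sampUpTo D r y k).card : ℝ) ≤ x) *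
          ((A : ℝ) - k) / (A : ℝ) + (k : ℝ) / (A : ℝ) := by
    refine main.trans (le_of_eq ?_)
    field_simp
    ring
  refine ⟨?_, goal2⟩
  rw [div_le_iff₀ hAk]
  have hmul := mul_le_mul_of_nonneg_right goal2 hAreal.le
  have e2 : (dnullProb P₀ D (fun r y => ((sampUpTo D r y k).card : ℝ) ≤ x) *
        ((A : ℝ) - k) / (A : ℝ) + (k : ℝ) / (A : ℝ)) * (A : ℝ)
      = dnullProb P₀ D (fun r y => ((sampUpTo D r y k).card : ℝ) ≤ x) *
        ((A : ℝ) - k) + k := by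
    field_simp
  rw [e2] at hmul
  have e1 : ((dprob P₀ P₁ D fun r ν y => ((sampUpTo D r y (D.tau r y)).card : ℝ) ≤ x)
      - (k:ℝ) / (A:ℝ)) * (A:ℝ)
      = (dprob P₀ P₁ D fun r ν y => ((sampUpTo D r y (D.tau r y)).card : ℝ) ≤ x) * (A:ℝ)
        - k := by
    field_simp
  rw [e1]
  linarith

end ChangeDetect
end
end

section
/- For any detector (𝒮_n, τ_n) operating at uncertainty level A_n and any value v ∈ {1,…,A_n}, the conditional law, given ν_n = v, of the set of sampling times taken strictly before the change, 𝒮^{≤v−1}, is equal to the law of 𝒮^{≤v−1} under ℙ₀, where ℙ₀ denotes the law obtained when the detector is run on an observation sequence that is i.i.d. P₀ throughout. Consequently, by Markov's inequality, for any ρ > 0 with v·ρ − n − 1 > 0: ℙ(|𝒮^{≤v−1}| ≥ v·ρ − n − 1 | ν_n = v) ≤ 𝔼₀|𝒮^{≤v}| / (v·ρ − n − 1), where 𝔼₀ denotes expectation under ℙ₀. -/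
open Filter Finset

noncomputable section

namespace ChangeDetect

variable {𝒴 : Type} [Fintype 𝒴]

lemma marginal {𝒴 : Type} [Fintype 𝒴] [Nonempty 𝒴] {T k : ℕ}
    (G : (Fin T → 𝒴) → ℝ)
    (hG : ∀ y y' : Fin T → 𝒴, (∀ i : Fin T, i.1 < k → y i = y' i) → G y = G y')
    (w w' : Fin T → 𝒴 → ℝ)
    (hww' : ∀ i : Fin T, i.1 < k → w i = w' i)
    (hs : ∀ i : Fin T, ∑ z, w i z = 1)
    (hs' : ∀ i : Fin T, ∑ z, w' i z = 1) :
    ∑ y : Fin T → 𝒴, G y * ∏ i, w i (y i)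
      = ∑ y : Fin T → 𝒴, G y * ∏ i, w' i (y i) := by
  classical
  have key : ∀ u : Fin T → 𝒴 → ℝ, (∀ i : Fin T, ∑ z, u i z = 1) →
      (∀ i : Fin T, i.1 < k → u i = w i) →
      ∑ y : Fin T → 𝒴, G y * ∏ i, u i (y i)
        = ∑ a : {i : Fin T // i.1 < k} → 𝒴,
            G (fun i => if h : i.1 < k then a ⟨i, h⟩ else Classical.arbitrary 𝒴)
              * ∏ i : {i : Fin T // i.1 < k}, w i.1 (a i) := by
    intro u hsum hagree
    set e := Equiv.piEquivPiSubtypeProd (fun i : Fin T => i.1 < k) (fun _ => 𝒴) with he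
    rw [← Equiv.sum_comp e.symm (fun y => G y * ∏ i, u i (y i)), Fintype.sum_prod_type]
    have hb : ∀ (a : {i : Fin T // i.1 < k} → 𝒴) (b : {i : Fin T // ¬ i.1 < k} → 𝒴),
        G (e.symm (a, b)) * ∏ i, u i (e.symm (a, b) i)
          = (G (fun i => if h : i.1 < k then a ⟨i, h⟩ else Classical.arbitrary 𝒴)
              * ∏ i : {i : Fin T // i.1 < k}, w i.1 (a i))
            * ∏ i : {i : Fin T // ¬ i.1 < k}, u i.1 (b i) := by
      intro a b
      have hGa : G (e.symm (a, b))
          = G (fun i => if h : i.1 < k then a ⟨i, h⟩ else Classical.arbitrary 𝒴) := by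
        apply hG
        intro i hi
        simp [he, Equiv.piEquivPiSubtypeProd_symm_apply, hi]
      have hprod : ∏ i, u i (e.symm (a, b) i)
          = (∏ i : {i : Fin T // i.1 < k}, w i.1 (a i))
            * ∏ i : {i : Fin T // ¬ i.1 < k}, u i.1 (b i) := by
        rw [← Fintype.prod_subtype_mul_prod_subtype (fun i : Fin T => i.1 < k)
          (fun i => u i (e.symm (a, b) i))]
        congr 1
        · apply Finset.prod_congr rfl
          intro i _
          rw [hagree i.1 i.2]
          congr 1
          simp [he, Equiv.piEquivPiSubtypeProd_symm_apply, i.2]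
        · apply Finset.prod_congr rfl
          intro i _
          congr 1
          simp [he, Equiv.piEquivPiSubtypeProd_symm_apply, i.2]
      rw [hGa, hprod]; ring
    calc ∑ a : {i : Fin T // i.1 < k} → 𝒴, ∑ b, G (e.symm (a, b)) * ∏ i, u i (e.symm (a, b) i)
        = ∑ a : {i : Fin T // i.1 < k} → 𝒴, ∑ b : {i : Fin T // ¬ i.1 < k} → 𝒴,
            (G (fun i => if h : i.1 < k then a ⟨i, h⟩ else Classical.arbitrary 𝒴)
              * ∏ i : {i : Fin T // i.1 < k}, w i.1 (a i))
            * ∏ i : {i : Fin T // ¬ i.1 < k}, u i.1 (b i) := by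
          exact Finset.sum_congr rfl fun a _ => Finset.sum_congr rfl fun b _ => hb a b
      _ = ∑ a : {i : Fin T // i.1 < k} → 𝒴, (G (fun i => if h : i.1 < k then a ⟨i, h⟩ else Classical.arbitrary 𝒴)
              * ∏ i : {i : Fin T // i.1 < k}, w i.1 (a i)) := by
          apply Finset.sum_congr rfl
          intro a _
          rw [← Finset.mul_sum]
          have : ∑ b : {i : Fin T // ¬ i.1 < k} → 𝒴,
              ∏ i : {i : Fin T // ¬ i.1 < k}, u i.1 (b i) = 1 := by
            rw [← Fintype.piFinset_univ, ← Finset.prod_univ_sum]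
            simp [hsum]
          rw [this, mul_one]
  rw [key w hs (fun i _ => rfl), key w' hs' (fun i h => (hww' i h).symm)]


/-- Pre-change samples have the pure-noise law, and a Markov bound.
For any detector operating at uncertainty level `A_n = ⌈2^(αn)⌉` and any change point
value `v` (change starting at time `v.1 + 1`), the conditional law, given `ν = v`, of the
set `𝒮^{≤v-1}` of samples taken strictly before the change equals its law under `ℙ₀`
(the i.i.d.-`P₀` law).  Consequently, by Markov's inequality, for any `ρ > 0` with
`v·ρ - n - 1 > 0`,
`ℙ(|𝒮^{≤v-1}| ≥ v·ρ - n - 1 ∣ ν = v) ≤ 𝔼₀|𝒮^{≤v}| / (v·ρ - n - 1)`. -/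
theorem statement15 {𝒴 : Type} [Fintype 𝒴] (P₀ P₁ : 𝒴 → ℝ)
    (h₀ : IsProb P₀) (h₁ : IsProb P₁) (hac : ∀ y, P₀ y = 0 → P₁ y = 0)
    (hD : 0 < KL P₁ P₀) (α : ℝ) (hα : 0 < α) (n : ℕ) (hn : 1 ≤ n)
    (D : Detector 𝒴 (Alevel α n) n) (v : Fin (Alevel α n)) :
    (∀ F : Finset ℕ → Prop,
      dcondProb P₀ P₁ D v (fun r y => F (sampUpTo D r y v.1))
        = dnullProb P₀ D (fun r y => F (sampUpTo D r y v.1))) ∧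
    ∀ ρ : ℝ, 0 < ρ → 0 < ((v.1 : ℝ) + 1) * ρ - n - 1 →
      dcondProb P₀ P₁ D v (fun r y =>
          ((v.1 : ℝ) + 1) * ρ - n - 1 ≤ ((sampUpTo D r y v.1).card : ℝ))
        ≤ dnullExp P₀ D (fun r y => ((sampUpTo D r y (v.1 + 1)).card : ℝ))
            / (((v.1 : ℝ) + 1) * ρ - n - 1) := by
  classical
  have hne : Nonempty 𝒴 := by
    by_contra h
    rw [not_nonempty_iff] at h
    have h2 := h₀.2
    rw [Finset.univ_eq_empty, Finset.sum_empty] at h2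
    norm_num at h2
  have parta : ∀ F : Finset ℕ → Prop,
      dcondProb P₀ P₁ D v (fun r y => F (sampUpTo D r y v.1))
        = dnullProb P₀ D (fun r y => F (sampUpTo D r y v.1)) := by
    intro F
    unfold dcondProb dnullProb nullProb
    apply Finset.sum_congr rfl
    intro r _
    congr 1
    have hmarg := marginal
      (G := fun y : Fin (Alevel α n + n - 1) → 𝒴 =>
        if F (sampUpTo D r y v.1) then (1:ℝ) else 0)
      (k := v.1)
      (fun y y' hagree => by
        have h := (D.causal r y y' v.1 (fun i hmem hle => hagree i (by omega))).1
        have hss : sampUpTo D r y' v.1 = sampUpTo D r y v.1 := h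
        simp only [hss])
      (fun i z => if v.1 ≤ i.1 ∧ i.1 < v.1 + n then P₁ z else P₀ z)
      (fun _ z => P₀ z)
      (fun i hi => by
        funext z
        exact if_neg (fun h => absurd h.1 (by omega)))
      (fun i => by
        by_cases hcnd : v.1 ≤ i.1 ∧ i.1 < v.1 + n <;> simp [hcnd, h₀.2, h₁.2])
      (fun i => h₀.2)
    have hL : ∀ y : Fin (Alevel α n + n - 1) → 𝒴,
        (if F (sampUpTo D r y v.1) then lik P₀ P₁ n v y else 0)
          = (if F (sampUpTo D r y v.1) then (1:ℝ) else 0)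
            * ∏ i, (if v.1 ≤ i.1 ∧ i.1 < v.1 + n then P₁ (y i) else P₀ (y i)) := by
      intro y
      rw [ite_mul, one_mul, zero_mul]
      rfl
    have hR : ∀ y : Fin (Alevel α n + n - 1) → 𝒴,
        (if F (sampUpTo D r y v.1) then ∏ i, P₀ (y i) else 0)
          = (if F (sampUpTo D r y v.1) then (1:ℝ) else 0) * ∏ i, P₀ (y i) := by
      intro y
      rw [ite_mul, one_mul, zero_mul]
    calc ∑ y : Fin (Alevel α n + n - 1) → 𝒴,
          (if F (sampUpTo D r y v.1) then lik P₀ P₁ n v y else 0)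
        = ∑ y : Fin (Alevel α n + n - 1) → 𝒴,
            (if F (sampUpTo D r y v.1) then (1:ℝ) else 0)
              * ∏ i, (if v.1 ≤ i.1 ∧ i.1 < v.1 + n then P₁ (y i) else P₀ (y i)) :=
          Finset.sum_congr rfl fun y _ => hL y
      _ = ∑ y : Fin (Alevel α n + n - 1) → 𝒴,
            (if F (sampUpTo D r y v.1) then (1:ℝ) else 0) * ∏ i, P₀ (y i) := hmarg
      _ = ∑ y : Fin (Alevel α n + n - 1) → 𝒴,
            (if F (sampUpTo D r y v.1) then ∏ i, P₀ (y i) else 0) :=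
          Finset.sum_congr rfl fun y _ => (hR y).symm
  refine ⟨parta, ?_⟩
  intro ρ hρ hc
  set c : ℝ := ((v.1 : ℝ) + 1) * ρ - n - 1 with hcdef
  refine le_trans (le_of_eq (parta (fun S => c ≤ (S.card : ℝ)))) ?_
  unfold dnullProb dnullExp
  rw [Finset.sum_div]
  apply Finset.sum_le_sum
  intro r _
  rw [mul_div_assoc]
  apply mul_le_mul_of_nonneg_left ?_ (D.μR_nonneg r)
  rw [le_div_iff₀ hc]
  unfold nullProb nullExp
  rw [Finset.sum_mul]
  apply Finset.sum_le_sum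
  intro y _
  have hprodnn : 0 ≤ ∏ i, P₀ (y i) := Finset.prod_nonneg fun i _ => h₀.1 _
  have hsub : sampUpTo D r y v.1 ⊆ sampUpTo D r y (v.1 + 1) := by
    intro t ht
    simp only [sampUpTo, Finset.mem_filter] at ht ⊢
    exact ⟨ht.1, by omega⟩
  have hcard : ((sampUpTo D r y v.1).card : ℝ) ≤ ((sampUpTo D r y (v.1 + 1)).card : ℝ) :=
    Nat.cast_le.mpr (Finset.card_le_card hsub)
  split_ifs with h
  · calc (∏ i, P₀ (y i)) * c = c * ∏ i, P₀ (y i) := mul_comm _ _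
      _ ≤ ((sampUpTo D r y (v.1 + 1)).card : ℝ) * ∏ i, P₀ (y i) :=
        mul_le_mul_of_nonneg_right (h.trans hcard) hprodnn
  · rw [zero_mul]
    exact mul_nonneg (Nat.cast_nonneg _) hprodnn


end ChangeDetect
end
end
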